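/- arXiv:2603.04693 — 5 statements merged into one kernel-verified Lean document; each statement's English description precedes it below -/
import Mathlib

section
/- For every n ≥ 1 and every regulated partition 𝒫 of ℝⁿ, every point of ℝⁿ is contained in at most 2ⁿ distinct members of 𝒫, and there exists a point x ∈ ℝⁿ contained in at least n+1 distinct members of 𝒫. Consequently, if 𝒫 is a γ-regulated partition of ℝⁿ then n+1 ≤ γ, and γ = 2ⁿ always suffices. -/
/-- An (full-dimensional) rectangle in `ι → ℝ`: a product of nondegenerate closed intervals. -/
def IsRect {ι : Type*} (R : Set (ι → ℝ)) : Prop :=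
  ∃ a b : ι → ℝ, (∀ i, a i < b i) ∧ R = Set.Icc a b

/-- `F` is a face of the rectangle `Q` with normal vector `e j`. -/
def IsFaceWithNormal {ι : Type*} (F Q : Set (ι → ℝ)) (j : ι) : Prop :=
  ∃ a b : ι → ℝ, (∀ i, a i < b i) ∧ Q = Set.Icc a b ∧
    (F = {y ∈ Q | y j = a j} ∨ F = {y ∈ Q | y j = b j})

/-- `F` is a face of the rectangle `Q`. -/
def IsFaceOf {ι : Type*} (F Q : Set (ι → ℝ)) : Prop :=
  ∃ j, IsFaceWithNormal F Q j

/-- `e j` is a boundary vector of `x` with respect to the collection `P`. -/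
def IsBoundaryVector {ι : Type*} (P : Set (Set (ι → ℝ))) (x : ι → ℝ) (j : ι) : Prop :=
  ∃ Q ∈ P, ∃ F, IsFaceWithNormal F Q j ∧ x ∈ F

/-- `ν_P(x)`: the number of members of `P` containing `x`. -/
noncomputable def nuP {ι : Type*} (P : Set (Set (ι → ℝ))) (x : ι → ℝ) : ℕ :=
  Set.ncard {Q | Q ∈ P ∧ x ∈ Q}

/-- `β_P(x)`: the number of boundary vectors of `x` with respect to `P`. -/
noncomputable def betaP {ι : Type*} (P : Set (Set (ι → ℝ))) (x : ι → ℝ) : ℕ :=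
  Set.ncard {j | IsBoundaryVector P x j}

/-- A locally regulated cover of `R`. -/
def IsLocRegCover {ι : Type*} (R : Set (ι → ℝ)) (P : Set (Set (ι → ℝ))) : Prop :=
  P.Finite ∧ (∀ Q ∈ P, IsRect Q) ∧ ⋃₀ P = R

/-- A locally regulated partition of `R`. -/
def IsLocRegPartition {ι : Type*} (R : Set (ι → ℝ)) (P : Set (Set (ι → ℝ))) : Prop :=
  IsLocRegCover R P ∧ ∀ Q₁ ∈ P, ∀ Q₂ ∈ P, Q₁ ≠ Q₂ → interior Q₁ ∩ interior Q₂ = ∅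

/-- The collection `P` is about `x` (inside `R`). -/
def IsAbout {ι : Type*} (R : Set (ι → ℝ)) (P : Set (Set (ι → ℝ))) (x : ι → ℝ) : Prop :=
  ∀ Q ∈ P, ∀ F, IsFaceOf F Q → x ∈ F ∨ ∃ G, IsFaceOf G R ∧ F ⊆ G

/-- A regulated partition of `ι → ℝ`. -/
def IsRegPartition {ι : Type*} (P : Set (Set (ι → ℝ))) : Prop :=
  (∃ (D : Set ℝ) (d : ℝ), 0 < d ∧ (∀ r₁ ∈ D, ∀ r₂ ∈ D, r₁ ≠ r₂ → d < |r₁ - r₂|) ∧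
    ∀ Q ∈ P, ∃ a b : ι → ℝ, (∀ i, a i ∈ D ∧ b i ∈ D ∧ a i < b i) ∧ Q = Set.Icc a b) ∧
  (∀ x : ι → ℝ, ∃ Q ∈ P, x ∈ Q) ∧
  (∀ Q₁ ∈ P, ∀ Q₂ ∈ P, Q₁ ≠ Q₂ → interior Q₁ ∩ interior Q₂ = ∅)

/-- `v` is the boundary incidence sequence of `x` with respect to the rectangle `Q`. -/
def IsBIS {ι : Type*} (Q : Set (ι → ℝ)) (x : ι → ℝ) (v : ι → ℤ) : Prop :=
  ∃ a b : ι → ℝ, (∀ i, a i < b i) ∧ Q = Set.Icc a b ∧ x ∈ Q ∧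
    ∀ j, v j = if x j = a j then 1 else if x j = b j then -1 else 0

private lemma mem_interior_Icc_aux {n : ℕ} {a b q : Fin n → ℝ}
    (h : ∀ i, a i < q i ∧ q i < b i) : q ∈ interior (Set.Icc a b) := by
  rw [mem_interior_iff_mem_nhds, ← Set.pi_univ_Icc]
  exact set_pi_mem_nhds Set.finite_univ fun i _ => Icc_mem_nhds (h i).1 (h i).2

/-- For every `n ≥ 1` and every regulated partition `P` of `ℝⁿ`, every point is
contained in at most `2ⁿ` members of `P`, there is a point contained in at least `n+1` members,
and consequently any `γ` for which `P` is `γ`-regulated satisfies `n+1 ≤ γ` (while `γ = 2ⁿ`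
always suffices). -/
theorem stmt0 (n : ℕ) (hn : 1 ≤ n) (P : Set (Set (Fin n → ℝ))) (hP : IsRegPartition P) :
    (∀ x : Fin n → ℝ, ∀ T : Finset (Set (Fin n → ℝ)),
        (∀ Q ∈ T, Q ∈ P ∧ x ∈ Q) → T.card ≤ 2 ^ n) ∧
    (∃ x : Fin n → ℝ, ∃ T : Finset (Set (Fin n → ℝ)),
        T.card = n + 1 ∧ ∀ Q ∈ T, Q ∈ P ∧ x ∈ Q) ∧
    (∀ γ : ℕ, 1 ≤ γ →
      (∀ x : Fin n → ℝ, ∀ T : Finset (Set (Fin n → ℝ)),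
        (∀ Q ∈ T, Q ∈ P ∧ x ∈ Q) → T.card ≤ γ) → n + 1 ≤ γ) := by
  classical
  obtain ⟨⟨D, d, hd, hsep, hrep⟩, hcov, hdisj⟩ := hP
  have hDle : ∀ r₁ ∈ D, ∀ r₂ ∈ D, r₁ < r₂ → r₁ + d < r₂ := by
    intro r₁ h₁ r₂ h₂ hlt
    have h := hsep r₁ h₁ r₂ h₂ (ne_of_lt hlt)
    rw [abs_sub_comm, abs_of_pos (by linarith)] at h
    linarith
  choose A B hAB hQeq using hrep
  -- Part 1: upper bound 2^n
  have part1 : ∀ x : Fin n → ℝ, ∀ T : Finset (Set (Fin n → ℝ)),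
      (∀ Q ∈ T, Q ∈ P ∧ x ∈ Q) → T.card ≤ 2 ^ n := by
    intro x T hT
    have key : ∀ Q₁, ∀ h₁ : Q₁ ∈ P, x ∈ Q₁ → ∀ Q₂, ∀ h₂ : Q₂ ∈ P, x ∈ Q₂ →
        (∀ i, (x i = B Q₁ h₁ i ↔ x i = B Q₂ h₂ i)) → Q₁ = Q₂ := by
      intro Q₁ h₁ hx₁ Q₂ h₂ hx₂ hpat
      by_contra hne
      have hx₁' : ∀ i, A Q₁ h₁ i ≤ x i ∧ x i ≤ B Q₁ h₁ i := by
        rw [hQeq Q₁ h₁, Set.mem_Icc] at hx₁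
        exact fun i => ⟨hx₁.1 i, hx₁.2 i⟩
      have hx₂' : ∀ i, A Q₂ h₂ i ≤ x i ∧ x i ≤ B Q₂ h₂ i := by
        rw [hQeq Q₂ h₂, Set.mem_Icc] at hx₂
        exact fun i => ⟨hx₂.1 i, hx₂.2 i⟩
      set q : Fin n → ℝ := fun i =>
        (max (A Q₁ h₁ i) (A Q₂ h₂ i) + min (B Q₁ h₁ i) (B Q₂ h₂ i)) / 2 with hqdef
      have hmm : ∀ i, max (A Q₁ h₁ i) (A Q₂ h₂ i) < min (B Q₁ h₁ i) (B Q₂ h₂ i) := by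
        intro i
        by_cases hb : x i = B Q₁ h₁ i
        · have hb₂ : x i = B Q₂ h₂ i := (hpat i).mp hb
          have ha₁ : A Q₁ h₁ i < x i := hb ▸ (hAB Q₁ h₁ i).2.2
          have ha₂ : A Q₂ h₂ i < x i := hb₂ ▸ (hAB Q₂ h₂ i).2.2
          have : max (A Q₁ h₁ i) (A Q₂ h₂ i) < x i := max_lt ha₁ ha₂
          have hm : x i ≤ min (B Q₁ h₁ i) (B Q₂ h₂ i) := le_min (le_of_eq hb) (le_of_eq hb₂)
          linarith
        · have hb₂ : x i ≠ B Q₂ h₂ i := fun h => hb ((hpat i).mpr h)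
          have h1 : x i < B Q₁ h₁ i := lt_of_le_of_ne (hx₁' i).2 hb
          have h2 : x i < B Q₂ h₂ i := lt_of_le_of_ne (hx₂' i).2 hb₂
          have : max (A Q₁ h₁ i) (A Q₂ h₂ i) ≤ x i := max_le (hx₁' i).1 (hx₂' i).1
          have : x i < min (B Q₁ h₁ i) (B Q₂ h₂ i) := lt_min h1 h2
          linarith
      have hq₁ : q ∈ interior Q₁ := by
        rw [hQeq Q₁ h₁]
        refine mem_interior_Icc_aux fun i => ⟨?_, ?_⟩
        · have := le_max_left (A Q₁ h₁ i) (A Q₂ h₂ i); have := hmm i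
          simp only [hqdef]; linarith
        · have := min_le_left (B Q₁ h₁ i) (B Q₂ h₂ i); have := hmm i
          simp only [hqdef]; linarith
      have hq₂ : q ∈ interior Q₂ := by
        rw [hQeq Q₂ h₂]
        refine mem_interior_Icc_aux fun i => ⟨?_, ?_⟩
        · have := le_max_right (A Q₁ h₁ i) (A Q₂ h₂ i); have := hmm i
          simp only [hqdef]; linarith
        · have := min_le_right (B Q₁ h₁ i) (B Q₂ h₂ i); have := hmm i
          simp only [hqdef]; linarith
      have := hdisj Q₁ h₁ Q₂ h₂ hne
      exact absurd (Set.mem_inter hq₁ hq₂) (this ▸ Set.notMem_empty q)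
    set f : Set (Fin n → ℝ) → (Fin n → Bool) := fun Q =>
      if h : Q ∈ P then fun i => decide (x i = B Q h i) else fun _ => false with hfdef
    have hcard : T.card ≤ (Finset.univ : Finset (Fin n → Bool)).card := by
      refine Finset.card_le_card_of_injOn f (fun _ _ => Finset.mem_univ _) ?_
      intro Q₁ hQ₁ Q₂ hQ₂ hfe
      have h₁ := (hT Q₁ (Finset.mem_coe.mp hQ₁)).1
      have h₂ := (hT Q₂ (Finset.mem_coe.mp hQ₂)).1
      simp only [hfdef, dif_pos h₁, dif_pos h₂] at hfe
      refine key Q₁ h₁ (hT Q₁ (Finset.mem_coe.mp hQ₁)).2 Q₂ h₂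
        (hT Q₂ (Finset.mem_coe.mp hQ₂)).2 fun i => ?_
      have := congrFun hfe i
      exact decide_eq_decide.mp this
    have : (Finset.univ : Finset (Fin n → Bool)).card = 2 ^ n := by
      simp [Finset.card_univ]
    omega
  -- Part 2: lower bound n+1
  have part2 : ∃ x : Fin n → ℝ, ∃ T : Finset (Set (Fin n → ℝ)),
      T.card = n + 1 ∧ ∀ Q ∈ T, Q ∈ P ∧ x ∈ Q := by
    obtain ⟨Q₀, hQ₀, hzero⟩ := hcov 0
    set a := A Q₀ hQ₀ with hadef
    set b := B Q₀ hQ₀ with hbdef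
    have hab : ∀ i, a i ∈ D ∧ b i ∈ D ∧ a i < b i := hAB Q₀ hQ₀
    have hbd : ∀ i, a i + d < b i := fun i => hDle _ (hab i).1 _ (hab i).2.1 (hab i).2.2
    set p : Fin n → (Fin n → ℝ) := fun j k => if k = j then a k - d / 4 else a k + d / 4
      with hpdef
    have hple : ∀ j k, p j k ≤ a k + d / 4 := by
      intro j k; simp only [hpdef]; split_ifs <;> linarith
    have hpge : ∀ j k, a k - d / 4 ≤ p j k := by
      intro j k; simp only [hpdef]; split_ifs <;> linarith
    choose Qf hQfP hQfmem using fun j => hcov (p j)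
    have hmemIcc : ∀ i j, p j ∈ Qf i →
        ∀ k, A (Qf i) (hQfP i) k ≤ p j k ∧ p j k ≤ B (Qf i) (hQfP i) k := by
      intro i j hm k
      rw [hQeq (Qf i) (hQfP i), Set.mem_Icc] at hm
      exact ⟨hm.1 k, hm.2 k⟩
    have hAle : ∀ i j, p j ∈ Qf i → ∀ k, A (Qf i) (hQfP i) k ≤ a k := by
      intro i j hm k
      by_contra h
      push_neg at h
      have h2 := hDle (a k) (hab k).1 _ ((hAB (Qf i) (hQfP i) k).1) h
      have h3 := (hmemIcc i j hm k).1
      have := hple j k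
      linarith
    have hBge : ∀ i j, p j ∈ Qf i → ∀ k, a k ≤ B (Qf i) (hQfP i) k := by
      intro i j hm k
      by_contra h
      push_neg at h
      have h2 := hDle _ ((hAB (Qf i) (hQfP i) k).2.1) (a k) (hab k).1 h
      have h3 := (hmemIcc i j hm k).2
      have := hpge j k
      linarith
    have hBgt : ∀ i j, p j ∈ Qf i → ∀ k, k ≠ j → a k + d < B (Qf i) (hQfP i) k := by
      intro i j hm k hkj
      have h3 := (hmemIcc i j hm k).2
      have hp : p j k = a k + d / 4 := by simp only [hpdef, if_neg hkj]
      rw [hp] at h3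
      have hne : a k < B (Qf i) (hQfP i) k := by linarith
      exact hDle _ (hab k).1 _ ((hAB (Qf i) (hQfP i) k).2.1) hne
    have hxQf : ∀ j, a ∈ Qf j := by
      intro j
      rw [hQeq (Qf j) (hQfP j), Set.mem_Icc]
      exact ⟨fun k => hAle j j (hQfmem j) k, fun k => hBge j j (hQfmem j) k⟩
    have hpne : ∀ j, p j ∉ Q₀ := by
      intro j hm
      rw [hQeq Q₀ hQ₀, Set.mem_Icc] at hm
      have h1 := hm.1 j
      have : p j j = a j - d / 4 := by simp [hpdef]
      rw [this] at h1
      linarith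
    have hQfne0 : ∀ j, Qf j ≠ Q₀ := fun j h => hpne j (h ▸ hQfmem j)
    have haQ₀ : a ∈ Q₀ := by
      rw [hQeq Q₀ hQ₀, Set.mem_Icc]
      exact ⟨le_refl _, fun i => le_of_lt (hab i).2.2⟩
    have hQfinj : Function.Injective Qf := by
      intro i j hij
      by_contra hne
      set q : Fin n → ℝ := fun k => a k + d / 2 with hqdef
      have hq0 : q ∈ interior Q₀ := by
        rw [hQeq Q₀ hQ₀]
        refine mem_interior_Icc_aux fun k => ⟨?_, ?_⟩
        · simp only [hqdef]; linarith
        · have := hbd k; simp only [hqdef]; linarith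
      have hpj : p j ∈ Qf i := hij ▸ hQfmem j
      have hqi : q ∈ interior (Qf i) := by
        rw [hQeq (Qf i) (hQfP i)]
        refine mem_interior_Icc_aux fun k => ⟨?_, ?_⟩
        · have := hAle i i (hQfmem i) k; simp only [hqdef]; linarith
        · by_cases hki : k = i
          · have := hBgt i j hpj k (hki ▸ hne)
            simp only [hqdef]; linarith
          · have := hBgt i i (hQfmem i) k hki
            simp only [hqdef]; linarith
      have := hdisj Q₀ hQ₀ (Qf i) (hQfP i) (Ne.symm (hQfne0 i))
      exact absurd (Set.mem_inter hq0 hqi) (this ▸ Set.notMem_empty q)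
    refine ⟨a, insert Q₀ (Finset.image Qf Finset.univ), ?_, ?_⟩
    · have hnotmem : Q₀ ∉ Finset.image Qf Finset.univ := by
        simp only [Finset.mem_image]
        rintro ⟨j, -, h⟩
        exact hQfne0 j h
      rw [Finset.card_insert_of_notMem hnotmem,
        Finset.card_image_of_injective _ hQfinj, Finset.card_univ, Fintype.card_fin]
    · intro Q hQ
      rcases Finset.mem_insert.mp hQ with rfl | hQ'
      · exact ⟨hQ₀, haQ₀⟩
      · obtain ⟨j, -, rfl⟩ := Finset.mem_image.mp hQ'
        exact ⟨hQfP j, hxQf j⟩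
  refine ⟨part1, part2, ?_⟩
  intro γ hγ hbound
  obtain ⟨x, T, hTcard, hT⟩ := part2
  have := hbound x T hT
  omega
end

section
/- Let R be an n-dimensional rectangle in ℝⁿ, let x ∈ Int(R), and let 𝒫 be a locally regulated cover of R about x that is separative (i.e., a principal matrix of x with respect to 𝒫 is separative). Then ν_𝒫(x) ≥ β_𝒫(x) + 1. -/
/-- Separative matrices (entries viewed as integers in `{0, ±1}`), defined by recursion
on the number of columns, with rows indexed by an arbitrary type. -/
def Separative : (k : ℕ) → {ρ : Type} → (ρ → Fin k → ℤ) → Prop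
  | 0, _, _ => True
  | 1, _, M => (∀ i, M i 0 = 0) ∨ (∃ i i', M i 0 * M i' 0 = -1)
  | (k+2), _, M => ∀ j : Fin (k + 2),
      Separative (k+1) (fun (p : {i // M i j ≠ -1}) (l : Fin (k+1)) => M p.1 (j.succAbove l)) ∧
      Separative (k+1) (fun (p : {i // M i j ≠ 1}) (l : Fin (k+1)) => M p.1 (j.succAbove l))

/-- `M` is a principal matrix of `x` with respect to the collection `P`
(via some enumeration of `P` by `Fin m`). -/
def IsPrincipalMatrix {n m : ℕ} (P : Set (Set (Fin n → ℝ))) (x : Fin n → ℝ)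
    (M : Fin m → Fin n → ℤ) : Prop :=
  ∃ e : Fin m → Set (Fin n → ℝ), Function.Injective e ∧ (∀ i, e i ∈ P) ∧
    (∀ Q ∈ P, ∃ i, e i = Q) ∧ ∀ i, IsBIS (e i) x (M i)


/-- Auxiliary: the "star" property, an unfolded consequence of separativity:
among rows compatible (off `j`) with a sign pattern `s`, if sign `s j` occurs
at column `j` then so does sign `-(s j)`. -/
def StarP {k : ℕ} {ρ : Type} (M : ρ → Fin k → ℤ) : Prop :=
  ∀ (j : Fin k) (s : Fin k → ℤ), (∀ l, s l = 1 ∨ s l = -1) →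
    ∀ i₀ : ρ, (∀ l, l ≠ j → M i₀ l = 0 ∨ M i₀ l = s l) → M i₀ j = s j →
      ∃ i : ρ, (∀ l, l ≠ j → M i l = 0 ∨ M i l = s l) ∧ M i j = -(s j)

lemma sep_to_star : ∀ (k : ℕ) {ρ : Type} (M : ρ → Fin k → ℤ),
    (∀ i j, M i j = 0 ∨ M i j = 1 ∨ M i j = -1) → Separative k M → StarP M := by
  intro k
  induction k using Nat.strong_induction_on with
  | _ k IH =>
    match k, IH with
    | 0, _ => intro ρ M _ _ j; exact j.elim0
    | 1, _ =>
      intro ρ M hE hsep j s hsgn i₀ _ hij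
      have hj0 : j = 0 := Subsingleton.elim _ _
      have hne : ¬ (∀ i, M i 0 = 0) := by
        intro h
        have := h i₀
        rw [hj0] at hij
        rcases hsgn 0 with h1 | h1 <;> rw [hij, h1] at this <;> norm_num at this
      have hsep' : (∀ i, M i 0 = 0) ∨ (∃ i i', M i 0 * M i' 0 = -1) := hsep
      rcases hsep'.resolve_left hne with ⟨i, i', hii⟩
      have hvac : ∀ (r : ρ), ∀ l, l ≠ j → M r l = 0 ∨ M r l = s l := by
        intro r l hl; exact absurd (Subsingleton.elim l j) hl
      rcases hsgn 0 with h1 | h1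
      · rcases hE i 0 with h | h | h
        · rw [h] at hii; norm_num at hii
        · refine ⟨i', hvac i', ?_⟩
          rw [hj0, h1]; rw [h] at hii; linarith
        · refine ⟨i, hvac i, ?_⟩; rw [hj0, h1, h]
      · rcases hE i 0 with h | h | h
        · rw [h] at hii; norm_num at hii
        · refine ⟨i, hvac i, ?_⟩; rw [hj0, h1, h]; norm_num
        · refine ⟨i', hvac i', ?_⟩
          rw [hj0, h1]; rw [h] at hii; norm_num; linarith
    | (k+2), IH =>
      intro ρ M hE hsep j s hsgn i₀ hcomp hij
      obtain ⟨j', hj'⟩ : ∃ j' : Fin (k+2), j' ≠ j := exists_ne j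
      obtain ⟨j'', hj''⟩ := Fin.exists_succAbove_eq hj'.symm
      have finish : ∀ (σ : ρ → Prop), (∀ i, σ i ↔ M i j' ≠ -(s j')) →
          Separative (k+1) (fun (p : {i // σ i}) (l : Fin (k+1)) => M p.1 (j'.succAbove l)) →
          ∃ i, (∀ l, l ≠ j → M i l = 0 ∨ M i l = s l) ∧ M i j = -(s j) := by
        intro σ hστ hsepN
        set N : {i // σ i} → Fin (k+1) → ℤ := fun p l => M p.1 (j'.succAbove l) with hN
        have hEN : ∀ p l, N p l = 0 ∨ N p l = 1 ∨ N p l = -1 := fun p l => hE _ _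
        have hstarN : StarP N := IH (k+1) (by omega) N hEN hsepN
        have hsj' : s j' = 1 ∨ s j' = -1 := hsgn j'
        have hpf : σ i₀ := by
          rw [hστ]
          rcases hcomp j' hj' with h | h <;> rw [h] <;> rcases hsj' with h1 | h1 <;>
            rw [h1] <;> norm_num
        have hcompN : ∀ l, l ≠ j'' → N ⟨i₀, hpf⟩ l = 0 ∨ N ⟨i₀, hpf⟩ l = s (j'.succAbove l) := by
          intro l hl
          refine hcomp _ (fun hc => hl ?_)
          exact Fin.succAbove_right_injective (p := j') (hj''.symm ▸ hc)
        have hNj'' : N ⟨i₀, hpf⟩ j'' = s (j'.succAbove j'') := by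
          show M i₀ (j'.succAbove j'') = _
          rw [hj'', hij]
        obtain ⟨p, hpc, hpj⟩ := hstarN j'' (fun l => s (j'.succAbove l)) (fun l => hsgn _)
          ⟨i₀, hpf⟩ hcompN hNj''
        refine ⟨p.1, ?_, ?_⟩
        · intro l hl
          by_cases hlj' : l = j'
          · subst hlj'
            have := (hστ p.1).mp p.2
            rcases hE p.1 l with h | h | h <;> rcases hsj' with h1 | h1 <;>
              rw [h1] at this ⊢ <;> simp [h] at this ⊢ <;> omega
          · obtain ⟨l'', hl''⟩ := Fin.exists_succAbove_eq hlj'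
            have hl''j : l'' ≠ j'' := by
              intro hc; exact hl (by rw [← hl'', hc, hj''])
            have := hpc l'' hl''j
            rw [← hl'']; exact this
        · have : M p.1 (j'.succAbove j'') = -(s (j'.succAbove j'')) := hpj
          rwa [hj''] at this
      rcases hsgn j' with hsj | hsj
      · refine finish (fun i => M i j' ≠ -1) (fun i => by simp [hsj]) ?_
        exact (hsep j').1
      · refine finish (fun i => M i j' ≠ 1) (fun i => by simp [hsj]) ?_
        exact (hsep j').2

/-- Auxiliary walking lemma: starting from a row that is nonzero somewhere on `S`,
one can find a row compatible on `S` with the sign pattern `s` and still nonzero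
somewhere on `S`. -/
lemma walk : ∀ (d k : ℕ) {ρ : Type} (M : ρ → Fin k → ℤ),
    (∀ i j, M i j = 0 ∨ M i j = 1 ∨ M i j = -1) → StarP M →
    ∀ (s : Fin k → ℤ), (∀ l, s l = 1 ∨ s l = -1) →
    ∀ (S : Finset (Fin k)) (i₀ : ρ), (∃ j ∈ S, M i₀ j ≠ 0) →
    (S.filter (fun j => M i₀ j = -(s j))).card ≤ d →
    ∃ i, (∀ j ∈ S, M i j = 0 ∨ M i j = s j) ∧ ∃ j ∈ S, M i j ≠ 0 := by
  intro d
  induction d with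
  | zero =>
    intro k ρ M hE _ s hsgn S i₀ hnz hcard
    refine ⟨i₀, ?_, hnz⟩
    intro j hj
    have hnotin : M i₀ j ≠ -(s j) := by
      intro hc
      have : j ∈ S.filter (fun j => M i₀ j = -(s j)) := Finset.mem_filter.mpr ⟨hj, hc⟩
      have := Finset.card_pos.mpr ⟨j, this⟩
      omega
    rcases hE i₀ j with h | h | h <;> rcases hsgn j with h1 | h1 <;>
      rw [h1] at hnotin ⊢ <;> omega
  | succ d IH =>
    intro k ρ M hE hstar s hsgn S i₀ hnz hcard
    by_cases hc : (S.filter (fun j => M i₀ j = -(s j))).card ≤ d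
    · exact IH k M hE hstar s hsgn S i₀ hnz hc
    · have hne : (S.filter (fun j => M i₀ j = -(s j))).Nonempty := by
        rw [← Finset.card_pos]; omega
      obtain ⟨l, hl⟩ := hne
      have hlmem : l ∈ S.filter (fun j => M i₀ j = -(s j)) := hl
      rw [Finset.mem_filter] at hl
      obtain ⟨hlS, hlval⟩ := hl
      have hsl : s l = 1 ∨ s l = -1 := hsgn l
      obtain ⟨t, htsgn, ht0, htne⟩ : ∃ t : Fin k → ℤ, (∀ m, t m = 1 ∨ t m = -1) ∧
          (∀ m, M i₀ m = 0 → t m = s m) ∧ (∀ m, M i₀ m ≠ 0 → t m = M i₀ m) := by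
        refine ⟨fun m => if M i₀ m = 0 then s m else M i₀ m, fun m => ?_,
          fun m h => if_pos h, fun m h => if_neg h⟩
        dsimp only
        by_cases h : M i₀ m = 0
        · rw [if_pos h]; exact hsgn m
        · rw [if_neg h]; rcases hE i₀ m with h' | h' | h'
          · exact absurd h' h
          · exact Or.inl h'
          · exact Or.inr h'
      have hcompt : ∀ m, m ≠ l → M i₀ m = 0 ∨ M i₀ m = t m := by
        intro m _
        by_cases h : M i₀ m = 0
        · exact Or.inl h
        · exact Or.inr (htne m h).symm
      have hl0 : M i₀ l ≠ 0 := by omega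
      have htl : M i₀ l = t l := (htne l hl0).symm
      obtain ⟨i₁, h1c, h1l⟩ := hstar l t htsgn i₀ hcompt htl
      have h1lval : M i₁ l = s l := by rw [h1l, ← htl, hlval]; ring
      have hnz1 : ∃ j ∈ S, M i₁ j ≠ 0 := ⟨l, hlS, by omega⟩
      have hsub : S.filter (fun j => M i₁ j = -(s j)) ⊆
          (S.filter (fun j => M i₀ j = -(s j))).erase l := by
        intro j hj
        rw [Finset.mem_filter] at hj
        obtain ⟨hjS, hjval⟩ := hj
        have hjl : j ≠ l := by
          intro hc'; rw [hc'] at hjval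
          rcases hsl with h1 | h1 <;> omega
        refine Finset.mem_erase.mpr ⟨hjl, Finset.mem_filter.mpr ⟨hjS, ?_⟩⟩
        rcases h1c j hjl with h | h
        · rcases hsgn j with h1 | h1 <;> omega
        · have htj : t j = -(s j) := by omega
          by_cases h0 : M i₀ j = 0
          · have := ht0 j h0
            rcases hsgn j with h1 | h1 <;> omega
          · have := htne j h0
            omega
      have hcard1 : (S.filter (fun j => M i₁ j = -(s j))).card ≤ d := by
        have h1 := Finset.card_le_card hsub
        have h2 := Finset.card_erase_of_mem hlmem
        omega
      exact IH k M hE hstar s hsgn S i₁ hnz1 hcard1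

/-- Auxiliary key cardinality bound: a matrix with entries in `{0, ±1}` satisfying the star
property has more rows than nonzero columns. -/
lemma keycard (k : ℕ) {ρ : Type} [Fintype ρ] [Nonempty ρ] (M : ρ → Fin k → ℤ)
    (hE : ∀ i j, M i j = 0 ∨ M i j = 1 ∨ M i j = -1) (hstar : StarP M) :
    (Finset.univ.filter (fun j : Fin k => ∃ i, M i j ≠ 0)).card + 1 ≤ Fintype.card ρ := by
  classical
  set B := Finset.univ.filter (fun j : Fin k => ∃ i, M i j ≠ 0) with hB
  have hH : ∀ c : Fin k → ℝ, c ≠ 0 → (∀ j, c j ≠ 0 → ∃ i, M i j ≠ 0) →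
      ∃ i, 0 < ∑ j, c j * (M i j : ℝ) := by
    intro c hc hsupp
    obtain ⟨j₀, hj₀⟩ := Function.ne_iff.mp hc
    obtain ⟨i₀, hi₀⟩ := hsupp j₀ (by simpa using hj₀)
    obtain ⟨s, hsgn, hs⟩ : ∃ s : Fin k → ℤ, (∀ l, s l = 1 ∨ s l = -1) ∧
        (∀ l, c l ≠ 0 → 0 < c l * (s l : ℝ)) := by
      refine ⟨fun l => if 0 < c l then 1 else -1, fun l => ?_, fun l hl => ?_⟩
      · dsimp only; split; exacts [Or.inl rfl, Or.inr rfl]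
      · dsimp only; by_cases h : 0 < c l
        · rw [if_pos h]; push_cast; linarith
        · rw [if_neg h]; push_cast
          have : c l < 0 := lt_of_le_of_ne (not_lt.mp h) hl
          nlinarith
    set S := Finset.univ.filter (fun j : Fin k => c j ≠ 0) with hS
    have hj₀S : j₀ ∈ S := by simp [hS]; simpa using hj₀
    obtain ⟨i, hicomp, j₁, hj₁S, hj₁⟩ := walk (S.filter (fun j => M i₀ j = -(s j))).card k M
      hE hstar s hsgn S i₀ ⟨j₀, hj₀S, hi₀⟩ le_rfl
    have hterm : ∀ j, 0 ≤ c j * (M i j : ℝ) := by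
      intro j
      by_cases hcj : c j = 0
      · rw [hcj]; simp
      · have hjS : j ∈ S := by simp [hS, hcj]
        rcases hicomp j hjS with h | h
        · rw [h]; simp
        · rw [h]; exact le_of_lt (hs j hcj)
    have hpos : 0 < c j₁ * (M i j₁ : ℝ) := by
      have hcj₁ : c j₁ ≠ 0 := by
        rw [hS] at hj₁S; simpa using (Finset.mem_filter.mp hj₁S).2
      rcases hicomp j₁ hj₁S with h | h
      · exact absurd h hj₁
      · rw [h]; exact hs j₁ hcj₁
    exact ⟨i, Finset.sum_pos' (fun j _ => hterm j) ⟨j₁, Finset.mem_univ j₁, hpos⟩⟩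
  have hBsupp : ∀ j, j ∈ B ↔ ∃ i, M i j ≠ 0 := by intro j; simp [hB]
  by_contra hcon
  push_neg at hcon
  have hle : Fintype.card ρ ≤ B.card := by omega
  set A : Matrix ρ (↥B) ℝ := fun i p => (M i p.1 : ℝ) with hA
  set ext : (↥B → ℝ) → (Fin k → ℝ) := fun c j => if h : j ∈ B then c ⟨j, h⟩ else 0 with hext
  have hsum : ∀ (c : ↥B → ℝ) (i : ρ), ∑ j, ext c j * (M i j : ℝ) = A.mulVecLin c i := by
    intro c i
    rw [Matrix.mulVecLin_apply, Matrix.mulVec, dotProduct]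
    rw [← Finset.sum_subset (Finset.subset_univ B) (fun j _ hj => by
        rw [hext]; dsimp only; rw [dif_neg hj, zero_mul])]
    rw [← Finset.sum_coe_sort B (fun j => ext c j * (M i j : ℝ))]
    apply Finset.sum_congr rfl
    intro p _
    rw [hA, hext]; dsimp only; rw [dif_pos p.2, mul_comm]
  have hextne : ∀ c : ↥B → ℝ, c ≠ 0 → ext c ≠ 0 := by
    intro c hc
    obtain ⟨p, hp⟩ := Function.ne_iff.mp hc
    intro h0
    apply hp
    have := congrFun h0 p.1
    rw [hext] at this; dsimp only at this; rw [dif_pos p.2] at this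
    simpa using this
  have hextsupp : ∀ (c : ↥B → ℝ) (j : Fin k), ext c j ≠ 0 → ∃ i, M i j ≠ 0 := by
    intro c j h
    rw [hext] at h; dsimp only at h
    by_cases hj : j ∈ B
    · exact (hBsupp j).mp hj
    · rw [dif_neg hj] at h; exact absurd rfl h
  have hInj : Function.Injective (A.mulVecLin) := by
    have hker : ∀ c, A.mulVecLin c = 0 → c = 0 := by
      intro c hc0
      by_contra hc
      obtain ⟨i, hpos⟩ := hH (ext c) (hextne c hc) (hextsupp c)
      rw [hsum c i, hc0] at hpos
      simp at hpos
    intro a b hab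
    have := hker (a - b) (by rw [map_sub, hab, sub_self])
    exact sub_eq_zero.mp this
  have hrank : Module.finrank ℝ (↥B → ℝ) = Module.finrank ℝ (ρ → ℝ) := by
    rw [Module.finrank_fintype_fun_eq_card, Module.finrank_fintype_fun_eq_card,
      Fintype.card_coe]
    have := LinearMap.finrank_le_finrank_of_injective hInj
    rw [Module.finrank_fintype_fun_eq_card, Module.finrank_fintype_fun_eq_card,
      Fintype.card_coe] at this
    omega
  have hSurj : Function.Surjective (A.mulVecLin) :=
    (LinearMap.injective_iff_surjective_of_finrank_eq_finrank hrank).mp hInj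
  obtain ⟨c, hc⟩ := hSurj (fun _ => (-1 : ℝ))
  have hcne : c ≠ 0 := by
    intro h0
    rw [h0, map_zero] at hc
    have := congrFun hc (Classical.arbitrary ρ)
    norm_num at this
  obtain ⟨i, hpos⟩ := hH (ext c) (hextne c hcne) (hextsupp c)
  rw [hsum c i, hc] at hpos
  norm_num at hpos

/-- Auxiliary: a nondegenerate closed box determines its corners. -/
lemma icc_unique {ι : Type*} {a b a' b' : ι → ℝ} (h : ∀ i, a i < b i) (h' : ∀ i, a' i < b' i)
    (heq : Set.Icc a b = Set.Icc a' b') : a = a' ∧ b = b' := by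
  have hab : a ≤ b := fun i => (h i).le
  have hab' : a' ≤ b' := fun i => (h' i).le
  have h1 : a ∈ Set.Icc a' b' := by rw [← heq]; exact ⟨le_refl a, hab⟩
  have h2 : a' ∈ Set.Icc a b := by rw [heq]; exact ⟨le_refl a', hab'⟩
  have h3 : b ∈ Set.Icc a' b' := by rw [← heq]; exact ⟨hab, le_refl b⟩
  have h4 : b' ∈ Set.Icc a b := by rw [heq]; exact ⟨hab', le_refl b'⟩
  exact ⟨le_antisymm h2.1 h1.1, le_antisymm h3.2 h4.2⟩

/-- if `P` is a locally regulated cover of `R` about `x ∈ Int R` which is separative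
(i.e., a principal matrix of `x` with respect to `P` is separative), then `ν_P(x) ≥ β_P(x) + 1`. -/
theorem stmt1 (n : ℕ) (R : Set (Fin n → ℝ)) (x : Fin n → ℝ) (P : Set (Set (Fin n → ℝ)))
    (hR : IsRect R) (hx : x ∈ interior R)
    (hcov : IsLocRegCover R P) (hab : IsAbout R P x)
    (hsep : ∃ (m : ℕ) (M : Fin m → Fin n → ℤ), IsPrincipalMatrix P x M ∧ Separative n M) :
    betaP P x + 1 ≤ nuP P x := by
  classical
  obtain ⟨m, M, ⟨e, hinj, hmem, hsurj, hbis⟩, hsepM⟩ := hsep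
  choose a b hab hQeq hxmem hMdef using hbis
  have hE : ∀ i j, M i j = 0 ∨ M i j = 1 ∨ M i j = -1 := by
    intro i j
    rw [hMdef i j]
    split
    · right; left; rfl
    · split
      · right; right; rfl
      · left; rfl
  have hxR : x ∈ R := interior_subset hx
  rw [← hcov.2.2] at hxR
  obtain ⟨Q₀, hQ₀P, -⟩ := hxR
  obtain ⟨i₀, -⟩ := hsurj Q₀ hQ₀P
  have hne : Nonempty (Fin m) := ⟨i₀⟩
  have hnu : nuP P x = m := by
    have hPset : {Q | Q ∈ P ∧ x ∈ Q} = P := by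
      ext Q
      simp only [Set.mem_setOf_eq]
      refine ⟨fun h => h.1, fun h => ⟨h, ?_⟩⟩
      obtain ⟨i, hi⟩ := hsurj Q h
      rw [← hi]; exact hxmem i
    have hPrange : P = Set.range e := by
      ext Q
      constructor
      · intro h; obtain ⟨i, hi⟩ := hsurj Q h; exact ⟨i, hi⟩
      · rintro ⟨i, rfl⟩; exact hmem i
    rw [nuP, hPset, hPrange, ← Set.image_univ, Set.ncard_image_of_injective _ hinj]
    simp [Set.ncard_univ]
  have hbv : ∀ j, IsBoundaryVector P x j ↔ ∃ i, M i j ≠ 0 := by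
    intro j
    constructor
    · rintro ⟨Q, hQP, F, ⟨a', b', ha'b', hQ', hF⟩, hxF⟩
      obtain ⟨i, rfl⟩ := hsurj Q hQP
      obtain ⟨haa, hbb⟩ := icc_unique (fun l => hab i l) ha'b' ((hQeq i).symm.trans hQ')
      refine ⟨i, ?_⟩
      rw [hMdef i j]
      rcases hF with rfl | rfl
      · obtain ⟨-, hxa⟩ := hxF
        rw [if_pos (by rw [hxa, haa])]
        norm_num
      · obtain ⟨-, hxb⟩ := hxF
        have hxbj : x j = b i j := by rw [hxb, hbb]
        rw [if_neg (by rw [hxbj]; exact (hab i j).ne'), if_pos hxbj]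
        norm_num
    · rintro ⟨i, hi⟩
      rw [hMdef i j] at hi
      by_cases h1 : x j = a i j
      · exact ⟨e i, hmem i, {y ∈ e i | y j = a i j},
          ⟨a i, b i, hab i, hQeq i, Or.inl rfl⟩, ⟨hxmem i, h1⟩⟩
      · rw [if_neg h1] at hi
        by_cases h2 : x j = b i j
        · exact ⟨e i, hmem i, {y ∈ e i | y j = b i j},
            ⟨a i, b i, hab i, hQeq i, Or.inr rfl⟩, ⟨hxmem i, h2⟩⟩
        · rw [if_neg h2] at hi; exact absurd rfl hi
  have hbeta : betaP P x = (Finset.univ.filter (fun j : Fin n => ∃ i, M i j ≠ 0)).card := by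
    rw [betaP]
    have hset : {j | IsBoundaryVector P x j} =
        ↑(Finset.univ.filter (fun j : Fin n => ∃ i, M i j ≠ 0)) := by
      ext j
      simp [hbv j]
    rw [hset, Set.ncard_coe_finset]
  rw [hnu, hbeta]
  have hkey := keycard n (ρ := Fin m) M hE (sep_to_star n M hE hsepM)
  rw [Fintype.card_fin] at hkey
  convert hkey
end

section
/- Let R be an n-dimensional rectangle in ℝⁿ, let x ∈ Int(R), and let 𝒫 be a locally regulated partition of R about x. Then any principal matrix of x with respect to 𝒫 is separative. -/
lemma Icc_inj_aux {ι : Type*} {a b A B : ι → ℝ} (hab : ∀ i, a i < b i)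
    (hAB : ∀ i, A i < B i) (h : Set.Icc a b = Set.Icc A B) : a = A ∧ b = B := by
  have hab' : a ≤ b := fun i => (hab i).le
  have hAB' : A ≤ B := fun i => (hAB i).le
  have h1 : a ∈ Set.Icc A B := h ▸ (⟨le_refl _, hab'⟩ : a ∈ Set.Icc a b)
  have h2 : A ∈ Set.Icc a b := h.symm ▸ (⟨le_refl _, hAB'⟩ : A ∈ Set.Icc A B)
  have h3 : b ∈ Set.Icc A B := h ▸ (⟨hab', le_refl _⟩ : b ∈ Set.Icc a b)
  have h4 : B ∈ Set.Icc a b := h.symm ▸ (⟨hAB', le_refl _⟩ : B ∈ Set.Icc A B)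
  exact ⟨le_antisymm h2.1 h1.1, le_antisymm h3.2 h4.2⟩

lemma interior_Icc_pi {n : ℕ} (a b : Fin n → ℝ) :
    interior (Set.Icc a b) = Set.pi Set.univ fun i => Set.Ioo (a i) (b i) := by
  rw [← Set.pi_univ_Icc, interior_pi_set Set.finite_univ]
  simp [interior_Icc]

lemma mul_eq_neg_one_int {a b : ℤ} (h : a * b = -1) :
    (a = 1 ∧ b = -1) ∨ (a = -1 ∧ b = 1) := by
  have hu : IsUnit a := IsUnit.of_mul_eq_one (-b) (by rw [mul_neg, h]; ring)
  rcases Int.isUnit_iff.mp hu with rfl | rfl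
  · exact Or.inl ⟨rfl, by linarith⟩
  · exact Or.inr ⟨rfl, by linarith⟩

lemma sepLemma : ∀ (k : ℕ) {ρ : Type} (M : ρ → Fin k → ℤ),
    (∀ i j, M i j = 0 ∨ M i j = 1 ∨ M i j = -1) →
    (∀ i i' : ρ, (∃ j, M i j ≠ M i' j) → ∃ j, M i j * M i' j = -1) →
    (∀ ε : Fin k → ℤ, (∀ j, ε j = 1 ∨ ε j = -1) → ∃ i, ∀ j, M i j = 0 ∨ M i j = ε j) →
    Separative k M := by
  intro k
  induction k with
  | zero => intro ρ M _ _ _; trivial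
  | succ k ih =>
    obtain _ | k := k
    · intro ρ M hE hS hC
      show (∀ i, M i 0 = 0) ∨ (∃ i i', M i 0 * M i' 0 = -1)
      by_cases hz : ∀ i, M i 0 = 0
      · exact Or.inl hz
      · push_neg at hz
        obtain ⟨i₀, hi₀⟩ := hz
        right
        rcases hE i₀ 0 with h | h | h
        · exact absurd h hi₀
        · obtain ⟨i', hi'⟩ := hC (fun _ => -1) (fun _ => Or.inr rfl)
          rcases hi' 0 with h' | h'
          · obtain ⟨j, hj⟩ := hS i₀ i' ⟨0, by rw [h, h']; norm_num⟩
            exact ⟨i₀, i', by rwa [Subsingleton.elim (α := Fin 1) j 0] at hj⟩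
          · exact ⟨i₀, i', by rw [h, h']; norm_num⟩
        · obtain ⟨i', hi'⟩ := hC (fun _ => 1) (fun _ => Or.inl rfl)
          rcases hi' 0 with h' | h'
          · obtain ⟨j, hj⟩ := hS i₀ i' ⟨0, by rw [h, h']; norm_num⟩
            exact ⟨i₀, i', by rwa [Subsingleton.elim (α := Fin 1) j 0] at hj⟩
          · exact ⟨i₀, i', by rw [h, h']; norm_num⟩
    · intro ρ M hE hS hC
      intro j
      constructor
      · apply ih
        · intro p l; exact hE p.1 _
        · rintro p p' ⟨l, hl⟩
          obtain ⟨j₂, hj₂⟩ := hS p.1 p'.1 ⟨j.succAbove l, hl⟩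
          have hne : j₂ ≠ j := by
            rintro rfl
            rcases mul_eq_neg_one_int hj₂ with ⟨h1, h2⟩ | ⟨h1, h2⟩
            · exact p'.2 h2
            · exact p.2 h1
          obtain ⟨l₂, rfl⟩ := Fin.exists_succAbove_eq hne
          exact ⟨l₂, hj₂⟩
        · intro ε hε
          obtain ⟨i, hi⟩ := hC (j.insertNth (α := fun _ => ℤ) 1 ε) (by
            intro j₂
            rcases eq_or_ne j₂ j with rfl | h
            · left; simp
            · obtain ⟨l, rfl⟩ := Fin.exists_succAbove_eq h
              simpa using hε l)
          have hij : M i j ≠ -1 := by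
            have := hi j
            simp only [Fin.insertNth_apply_same] at this
            omega
          exact ⟨⟨i, hij⟩, fun l => by simpa using hi (j.succAbove l)⟩
      · apply ih
        · intro p l; exact hE p.1 _
        · rintro p p' ⟨l, hl⟩
          obtain ⟨j₂, hj₂⟩ := hS p.1 p'.1 ⟨j.succAbove l, hl⟩
          have hne : j₂ ≠ j := by
            rintro rfl
            rcases mul_eq_neg_one_int hj₂ with ⟨h1, h2⟩ | ⟨h1, h2⟩
            · exact p.2 h1
            · exact p'.2 h2
          obtain ⟨l₂, rfl⟩ := Fin.exists_succAbove_eq hne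
          exact ⟨l₂, hj₂⟩
        · intro ε hε
          obtain ⟨i, hi⟩ := hC (j.insertNth (α := fun _ => ℤ) (-1) ε) (by
            intro j₂
            rcases eq_or_ne j₂ j with rfl | h
            · right; simp
            · obtain ⟨l, rfl⟩ := Fin.exists_succAbove_eq h
              simpa using hε l)
          have hij : M i j ≠ 1 := by
            have := hi j
            simp only [Fin.insertNth_apply_same] at this
            omega
          exact ⟨⟨i, hij⟩, fun l => by simpa using hi (j.succAbove l)⟩

lemma row_struct {n : ℕ} {A B x a b : Fin n → ℝ}
    (hAB : ∀ i, A i < B i) (hx : ∀ i, A i < x i ∧ x i < B i)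
    (hab : ∀ i, a i < b i) (hsub : Set.Icc a b ⊆ Set.Icc A B)
    (hxm : x ∈ Set.Icc a b)
    (hface : ∀ F, IsFaceOf F (Set.Icc a b) → x ∈ F ∨ ∃ G, IsFaceOf G (Set.Icc A B) ∧ F ⊆ G)
    (j : Fin n) : (a j = x j ∨ a j = A j) ∧ (b j = x j ∨ b j = B j) := by
  have habl : a ≤ b := fun i => (hab i).le
  have hmema : a ∈ Set.Icc a b := ⟨le_refl _, habl⟩
  have hmemb : b ∈ Set.Icc a b := ⟨habl, le_refl _⟩
  constructor
  · rcases hface {y ∈ Set.Icc a b | y j = a j} ⟨j, a, b, hab, rfl, Or.inl rfl⟩ with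
      hxF | ⟨G, ⟨j', A', B', hA'B', hReq, hG⟩, hFG⟩
    · exact Or.inl hxF.2.symm
    · obtain ⟨hA', hB'⟩ := Icc_inj_aux hA'B' hAB hReq.symm
      rw [hA', hB'] at hG
      have hFa : a ∈ {y ∈ Set.Icc a b | y j = a j} := ⟨hmema, rfl⟩
      by_cases hjj : j' = j
      · subst hjj
        rcases hG with rfl | rfl
        · exact Or.inr (hFG hFa).2
        · exfalso
          have h1 : a j' ≤ x j' := hxm.1 j'
          have h2 := (hx j').2
          have h3 : a j' = B j' := (hFG hFa).2
          linarith
      · exfalso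
        have hq : Function.update a j' (b j') ∈ {y ∈ Set.Icc a b | y j = a j} := by
          refine ⟨⟨fun i => ?_, fun i => ?_⟩, ?_⟩
          · by_cases h : i = j'
            · subst h; rw [Function.update_self]; exact (hab i).le
            · rw [Function.update_of_ne h]
          · by_cases h : i = j'
            · subst h; rw [Function.update_self]
            · rw [Function.update_of_ne h]; exact habl i
          · rw [Function.update_of_ne (fun h => hjj h.symm)]
        rcases hG with rfl | rfl
        · have h1 : a j' = A j' := (hFG hFa).2
          have h2 : b j' = A j' := by
            have := (hFG hq).2
            rwa [Function.update_self] at this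
          exact absurd (h1.trans h2.symm) (hab j').ne
        · have h1 : a j' = B j' := (hFG hFa).2
          have h2 : b j' = B j' := by
            have := (hFG hq).2
            rwa [Function.update_self] at this
          exact absurd (h1.trans h2.symm) (hab j').ne
  · rcases hface {y ∈ Set.Icc a b | y j = b j} ⟨j, a, b, hab, rfl, Or.inr rfl⟩ with
      hxF | ⟨G, ⟨j', A', B', hA'B', hReq, hG⟩, hFG⟩
    · exact Or.inl hxF.2.symm
    · obtain ⟨hA', hB'⟩ := Icc_inj_aux hA'B' hAB hReq.symm
      rw [hA', hB'] at hG
      have hFb : b ∈ {y ∈ Set.Icc a b | y j = b j} := ⟨hmemb, rfl⟩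
      by_cases hjj : j' = j
      · subst hjj
        rcases hG with rfl | rfl
        · exfalso
          have h1 : x j' ≤ b j' := hxm.2 j'
          have h2 := (hx j').1
          have h3 : b j' = A j' := (hFG hFb).2
          linarith
        · exact Or.inr (hFG hFb).2
      · exfalso
        have hq : Function.update b j' (a j') ∈ {y ∈ Set.Icc a b | y j = b j} := by
          refine ⟨⟨fun i => ?_, fun i => ?_⟩, ?_⟩
          · by_cases h : i = j'
            · subst h; rw [Function.update_self]
            · rw [Function.update_of_ne h]; exact habl i
          · by_cases h : i = j'
            · subst h; rw [Function.update_self]; exact (hab i).le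
            · rw [Function.update_of_ne h]
          · rw [Function.update_of_ne (fun h => hjj h.symm)]
        rcases hG with rfl | rfl
        · have h1 : b j' = A j' := (hFG hFb).2
          have h2 : a j' = A j' := by
            have := (hFG hq).2
            rwa [Function.update_self] at this
          exact absurd (h2.trans h1.symm) (hab j').ne
        · have h1 : b j' = B j' := (hFG hFb).2
          have h2 : a j' = B j' := by
            have := (hFG hq).2
            rwa [Function.update_self] at this
          exact absurd (h2.trans h1.symm) (hab j').ne

/-- any principal matrix of `x` with respect to a locally regulated partition of `R`
about `x` is separative. -/
theorem stmt2 (n : ℕ) (R : Set (Fin n → ℝ)) (x : Fin n → ℝ) (P : Set (Set (Fin n → ℝ)))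
    (hR : IsRect R) (hx : x ∈ interior R)
    (hpart : IsLocRegPartition R P) (hab : IsAbout R P x) :
    ∀ (m : ℕ) (M : Fin m → Fin n → ℤ), IsPrincipalMatrix P x M → Separative n M := by
  obtain ⟨A, B, hAB, rfl⟩ := hR
  have hxAB : ∀ i, A i < x i ∧ x i < B i := by
    rw [interior_Icc_pi] at hx
    intro i
    exact ⟨(Set.mem_univ_pi.mp hx i).1, (Set.mem_univ_pi.mp hx i).2⟩
  obtain ⟨⟨hfin, hrect, hcover⟩, hdisj⟩ := hpart
  rintro m M ⟨e, hinj, hmem, hsurj, hbis⟩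
  have key : ∀ i : Fin m, ∃ a b : Fin n → ℝ, (∀ j, a j < b j) ∧ e i = Set.Icc a b ∧
      ∀ j, (M i j = 1 ∧ a j = x j ∧ b j = B j) ∨ (M i j = -1 ∧ a j = A j ∧ b j = x j) ∨
        (M i j = 0 ∧ a j = A j ∧ b j = B j) := by
    intro i
    obtain ⟨a, b, hab', heq, hxm, hM⟩ := hbis i
    refine ⟨a, b, hab', heq, fun j => ?_⟩
    have hsub : Set.Icc a b ⊆ Set.Icc A B := by
      rw [← hcover, ← heq]
      exact Set.subset_sUnion_of_mem (hmem i)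
    have hxm' : x ∈ Set.Icc a b := by rw [← heq]; exact hxm
    have hface : ∀ F, IsFaceOf F (Set.Icc a b) →
        x ∈ F ∨ ∃ G, IsFaceOf G (Set.Icc A B) ∧ F ⊆ G := by
      intro F hF
      exact hab (e i) (hmem i) F (by rw [heq]; exact hF)
    obtain ⟨hlow, hup⟩ := row_struct hAB hxAB hab' hsub hxm' hface j
    have hMj := hM j
    rcases hlow with h1 | h1
    · have hb : b j = B j := by
        rcases hup with h2 | h2
        · exfalso; have := hab' j; rw [h1, h2] at this; exact lt_irrefl _ this
        · exact h2
      left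
      refine ⟨?_, h1, hb⟩
      rw [hMj, if_pos h1.symm]
    · have hax : x j ≠ a j := by rw [h1]; exact ((hxAB j).1).ne'
      rcases hup with h2 | h2
      · right; left
        refine ⟨?_, h1, h2⟩
        rw [hMj, if_neg hax, if_pos h2.symm]
      · right; right
        refine ⟨?_, h1, h2⟩
        have hbx : x j ≠ b j := by rw [h2]; exact ((hxAB j).2).ne
        rw [hMj, if_neg hax, if_neg hbx]
  apply sepLemma n M
  · intro i j
    obtain ⟨a, b, _, _, hcl⟩ := key i
    rcases hcl j with ⟨h, _⟩ | ⟨h, _⟩ | ⟨h, _⟩ <;> simp [h]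
  · rintro i i' ⟨j, hj⟩
    obtain ⟨a, b, hab1, heq1, hcl1⟩ := key i
    obtain ⟨a', b', hab2, heq2, hcl2⟩ := key i'
    have hne : e i ≠ e i' := by
      intro h
      rw [heq1, heq2] at h
      obtain ⟨ha, hb⟩ := Icc_inj_aux hab1 hab2 h
      apply hj
      rcases hcl1 j with ⟨m1, p1, q1⟩ | ⟨m1, p1, q1⟩ | ⟨m1, p1, q1⟩ <;>
        rcases hcl2 j with ⟨m2, p2, q2⟩ | ⟨m2, p2, q2⟩ | ⟨m2, p2, q2⟩ <;>
        rw [m1, m2] <;>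
        exfalso <;>
        linarith [p1, p2, q1, q2, congrFun ha j, congrFun hb j, (hxAB j).1, (hxAB j).2]
    have hdis := hdisj (e i) (hmem i) (e i') (hmem i') hne
    rw [heq1, heq2, interior_Icc_pi, interior_Icc_pi] at hdis
    by_contra hcon
    push_neg at hcon
    have hsel : ∀ l, ∃ t, a l < t ∧ t < b l ∧ a' l < t ∧ t < b' l := by
      intro l
      have hcl := hcon l
      rcases hcl1 l with ⟨m1, p1, q1⟩ | ⟨m1, p1, q1⟩ | ⟨m1, p1, q1⟩ <;>
      rcases hcl2 l with ⟨m2, p2, q2⟩ | ⟨m2, p2, q2⟩ | ⟨m2, p2, q2⟩ <;>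
      rw [m1, m2] at hcl <;>
      first
        | (refine ⟨(x l + B l)/2, ?_, ?_, ?_, ?_⟩ <;>
            linarith [p1, q1, p2, q2, (hxAB l).1, (hxAB l).2])
        | (refine ⟨(A l + x l)/2, ?_, ?_, ?_, ?_⟩ <;>
            linarith [p1, q1, p2, q2, (hxAB l).1, (hxAB l).2])
        | norm_num at hcl
    choose z hz using hsel
    have hzmem : z ∈ (Set.pi Set.univ fun l => Set.Ioo (a l) (b l)) ∩
        (Set.pi Set.univ fun l => Set.Ioo (a' l) (b' l)) :=
      ⟨fun l _ => ⟨(hz l).1, (hz l).2.1⟩, fun l _ => ⟨(hz l).2.2.1, (hz l).2.2.2⟩⟩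
    rw [hdis] at hzmem
    exact hzmem
  · intro ε hε
    classical
    set y : Fin n → ℝ := fun l => if ε l = 1 then (x l + B l)/2 else (A l + x l)/2 with hy
    have hyR : y ∈ Set.Icc A B := by
      refine ⟨fun l => ?_, fun l => ?_⟩ <;>
        · simp only [hy]
          split_ifs <;> linarith [(hxAB l).1, (hxAB l).2, hAB l]
    have hyP : y ∈ ⋃₀ P := by rw [hcover]; exact hyR
    obtain ⟨Q, hQP, hyQ⟩ := hyP
    obtain ⟨i, rfl⟩ := hsurj Q hQP
    refine ⟨i, fun l => ?_⟩
    obtain ⟨a, b, hab1, heq1, hcl1⟩ := key i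
    rw [heq1] at hyQ
    have hya : a l ≤ y l := hyQ.1 l
    have hyb : y l ≤ b l := hyQ.2 l
    rcases hε l with h | h
    · have hyx : x l < y l := by
        have : y l = (x l + B l)/2 := by simp [hy, h]
        rw [this]; linarith [(hxAB l).2]
      rcases hcl1 l with ⟨m1, p1, q1⟩ | ⟨m1, p1, q1⟩ | ⟨m1, p1, q1⟩
      · right; rw [m1, h]
      · exfalso; linarith [q1]
      · left; exact m1
    · have hyx : y l < x l := by
        have : y l = (A l + x l)/2 := by simp [hy, h]
        rw [this]; linarith [(hxAB l).1]
      rcases hcl1 l with ⟨m1, p1, q1⟩ | ⟨m1, p1, q1⟩ | ⟨m1, p1, q1⟩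
      · exfalso; linarith [p1]
      · right; rw [m1, h]
      · left; exact m1
end

section
/- Let 𝒫 be a regulated partition of ℝⁿ and let x ∈ ℝⁿ. Then ν_𝒫(x) ≥ β_𝒫(x) + 1, i.e., the number of members of 𝒫 containing x is at least one more than the number of standard unit vectors e_j such that x lies on a face with normal vector e_j of some member of 𝒫. -/
set_option linter.unusedSectionVars false
set_option linter.unnecessarySeqFocus false
set_option maxHeartbeats 1000000
open scoped Classical
open Finset

open scoped Classical
open Finset

/-- compatibility of a sign vector with a ±1 vector -/
def RPCompat {ι : Type*} (σ ε : ι → ℤ) : Prop := ∀ j, σ j = 0 ∨ σ j = ε j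

/-- a ±1 vector -/
def RPpm {ι : Type*} (ε : ι → ℤ) : Prop := ∀ j, ε j = 1 ∨ ε j = -1

section Comb

variable {ι : Type*} [Fintype ι] [DecidableEq ι]

lemma RP.exists_neg {S : Finset (ι → ℤ)}
    (hsgn : ∀ σ ∈ S, ∀ j, σ j = 1 ∨ σ j = -1 ∨ σ j = 0)
    (hex : ∀ ε : ι → ℤ, RPpm ε → ∃! σ, σ ∈ S ∧ RPCompat σ ε)
    {σ : ι → ℤ} (hσ : σ ∈ S) (j : ι) (hj : σ j ≠ 0) :
    ∃ σ' ∈ S, σ' j = -σ j := by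
  set ε : ι → ℤ := fun k => if k = j then -σ j else if σ k = 0 then 1 else σ k with hε
  have hεj : ε j = -σ j := by simp [hε]
  have hεk : ∀ k, k ≠ j → σ k ≠ 0 → ε k = σ k := by
    intro k hk h0; simp [hε, hk, h0]
  have hpm : RPpm ε := by
    intro k
    by_cases hk : k = j
    · subst hk
      rcases hsgn σ hσ k with h | h | h
      · right; rw [hεj, h]
      · left; rw [hεj, h]; norm_num
      · exact absurd h hj
    · by_cases h0 : σ k = 0
      · left; simp [hε, hk, h0]
      · rw [hεk k hk h0]
        rcases hsgn σ hσ k with h | h | h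
        · exact Or.inl h
        · exact Or.inr h
        · exact absurd h h0
  obtain ⟨σ', ⟨hσ'S, hσ'c⟩, _⟩ := hex ε hpm
  rcases hσ'c j with h0 | hv
  · -- σ' j = 0 : derive contradiction via ε₂
    exfalso
    set ε₂ : ι → ℤ := Function.update ε j (σ j) with hε₂
    have hpm₂ : RPpm ε₂ := by
      intro k
      by_cases hk : k = j
      · subst hk
        rw [hε₂, Function.update_self]
        rcases hsgn σ hσ k with h | h | h
        · exact Or.inl h
        · exact Or.inr h
        · exact absurd h hj
      · rw [hε₂, Function.update_of_ne hk]; exact hpm k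
    have hcσ : RPCompat σ ε₂ := by
      intro k
      by_cases hk : k = j
      · subst hk; right; rw [hε₂, Function.update_self]
      · by_cases h0' : σ k = 0
        · exact Or.inl h0'
        · right; rw [hε₂, Function.update_of_ne hk, hεk k hk h0']
    have hcσ' : RPCompat σ' ε₂ := by
      intro k
      by_cases hk : k = j
      · subst hk; exact Or.inl h0
      · rw [hε₂, Function.update_of_ne hk]; exact hσ'c k
    obtain ⟨u, _, huq⟩ := hex ε₂ hpm₂
    have e1 := huq σ ⟨hσ, hcσ⟩
    have e2 := huq σ' ⟨hσ'S, hcσ'⟩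
    have : σ j = σ' j := by rw [e1, e2]
    rw [h0] at this
    exact hj this
  · exact ⟨σ', hσ'S, by rw [hv, hεj]⟩

lemma RP.pivot {S : Finset (ι → ℤ)}
    (hsgn : ∀ σ ∈ S, ∀ j, σ j = 1 ∨ σ j = -1 ∨ σ j = 0)
    (hex : ∀ ε : ι → ℤ, RPpm ε → ∃! σ, σ ∈ S ∧ RPCompat σ ε)
    (hne : ∃ j, ∃ σ ∈ S, σ j ≠ 0) :
    ∃ j, (∃ σ ∈ S, σ j ≠ 0) ∧
      ∀ k, (∃ σ ∈ S, σ k ≠ 0) → k ≠ j → ∃ σ ∈ S, σ k ≠ 0 ∧ σ j ≠ 1 := by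
  by_contra hcon
  push_neg at hcon
  choose! f hf using hcon
  obtain ⟨j₀, hj₀⟩ := hne
  set gg : ℕ → ι := fun i => f^[i] j₀ with hgg
  have hggsucc : ∀ i, gg (i+1) = f (gg i) := fun i => Function.iterate_succ_apply' f i j₀
  have hB : ∀ i, ∃ σ ∈ S, σ (gg i) ≠ 0 := by
    intro i
    induction i with
    | zero => simpa [hgg] using hj₀
    | succ i ih => rw [hggsucc]; exact (hf (gg i) ih).1
  have hstep : ∀ i, ∀ σ ∈ S, σ (gg (i+1)) ≠ 0 → σ (gg i) = 1 := by
    intro i σ hσ h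
    rw [hggsucc] at h
    exact (hf (gg i) (hB i)).2.2 σ hσ h
  have htrans : ∀ dd i, ∀ σ ∈ S, σ (gg (i + dd + 1)) ≠ 0 → σ (gg i) = 1 := by
    intro dd
    induction dd with
    | zero => intro i σ hσ h; exact hstep i σ hσ h
    | succ dd ih =>
      intro i σ hσ h
      have he : i + (dd+1) + 1 = (i + dd + 1) + 1 := by omega
      rw [he] at h
      have h1 : σ (gg (i + dd + 1)) = 1 := hstep (i+dd+1) σ hσ h
      exact ih i σ hσ (by rw [h1]; norm_num)
  obtain ⟨i1, i2, hne', heq⟩ := Finite.exists_ne_map_eq_of_infinite gg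
  obtain ⟨ia, ib, hlt, heq2⟩ : ∃ a b, a < b ∧ gg a = gg b := by
    rcases lt_or_gt_of_ne hne' with h | h
    · exact ⟨i1, i2, h, heq⟩
    · exact ⟨i2, i1, h, heq.symm⟩
  have hone : ∀ σ ∈ S, σ (gg ia) ≠ 0 → σ (gg ia) = 1 := by
    intro σ hσ h
    rw [heq2] at h
    have he : ia + (ib - ia - 1) + 1 = ib := by omega
    exact htrans (ib - ia - 1) ia σ hσ (by rw [he]; exact h)
  obtain ⟨σ, hσ, hσne⟩ := hB ia
  obtain ⟨σ', hσ', hσ'val⟩ := RP.exists_neg hsgn hex hσ (gg ia) hσne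
  rw [hone σ hσ hσne] at hσ'val
  have := hone σ' hσ' (by rw [hσ'val]; norm_num)
  rw [hσ'val] at this
  norm_num at this

lemma RP.comb_aux (m : ℕ) :
    ∀ S : Finset (ι → ℤ),
      (∀ σ ∈ S, ∀ j, σ j = 1 ∨ σ j = -1 ∨ σ j = 0) →
      (∀ ε : ι → ℤ, RPpm ε → ∃! σ, σ ∈ S ∧ RPCompat σ ε) →
      (Finset.univ.filter fun j => ∃ σ ∈ S, σ j ≠ 0).card ≤ m →
      (Finset.univ.filter fun j => ∃ σ ∈ S, σ j ≠ 0).card + 1 ≤ S.card := by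
  induction m with
  | zero =>
    intro S hsgn hex hc
    obtain ⟨σ, ⟨hσ, _⟩, _⟩ := hex (fun _ => 1) (fun _ => Or.inl rfl)
    have h0 : (Finset.univ.filter fun j => ∃ σ ∈ S, σ j ≠ 0).card = 0 := Nat.le_zero.mp hc
    rw [h0]
    simpa using Finset.card_pos.mpr ⟨σ, hσ⟩
  | succ m ih =>
    intro S hsgn hex hc
    by_cases hm : (Finset.univ.filter fun j => ∃ σ ∈ S, σ j ≠ 0).card ≤ m
    · exact ih S hsgn hex hm
    push_neg at hm
    have hBne : ∃ j, ∃ σ ∈ S, σ j ≠ 0 := by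
      have h0 : 0 < (Finset.univ.filter fun j => ∃ σ ∈ S, σ j ≠ 0).card := lt_of_le_of_lt (Nat.zero_le m) hm
      obtain ⟨j, hj⟩ := Finset.card_pos.mp h0
      exact ⟨j, (Finset.mem_filter.mp hj).2⟩
    obtain ⟨j, hjB, hpiv⟩ := RP.pivot hsgn hex hBne
    set T := S.filter (fun σ => ¬ σ j = 1) with hT
    set S' := T.image (fun σ => Function.update σ j 0) with hS'
    have hTzero : ∀ σ ∈ T, σ j = 0 ∨ σ j = -1 := by
      intro σ hσ
      obtain ⟨hσS, hσj⟩ := Finset.mem_filter.mp hσ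
      rcases hsgn σ hσS j with h | h | h
      · exact absurd h hσj
      · exact Or.inr h
      · exact Or.inl h
    have hcompat' : ∀ σ ∈ T, ∀ ε : ι → ℤ, RPCompat (Function.update σ j 0) ε →
        RPCompat σ (Function.update ε j (-1)) := by
      intro σ hσ ε hcc k
      by_cases hk : k = j
      · subst hk
        rcases hTzero σ hσ with h | h
        · exact Or.inl h
        · right; rw [h, Function.update_self]
      · rw [Function.update_of_ne hk]
        have h2 := hcc k
        rwa [Function.update_of_ne hk] at h2
    have hpm' : ∀ ε : ι → ℤ, RPpm ε → RPpm (Function.update ε j (-1)) := by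
      intro ε hε k
      by_cases hk : k = j
      · subst hk; right; rw [Function.update_self]
      · rw [Function.update_of_ne hk]; exact hε k
    have hex' : ∀ ε : ι → ℤ, RPpm ε → ∃! u, u ∈ S' ∧ RPCompat u ε := by
      intro ε hε
      obtain ⟨σ₀, ⟨hσ₀S, hσ₀c⟩, huniq⟩ := hex (Function.update ε j (-1)) (hpm' ε hε)
      have hσ₀T : σ₀ ∈ T := by
        rw [hT, Finset.mem_filter]
        refine ⟨hσ₀S, ?_⟩
        rcases hσ₀c j with h | h
        · rw [h]; norm_num
        · rw [Function.update_self] at h; rw [h]; norm_num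
      refine ⟨Function.update σ₀ j 0, ⟨Finset.mem_image_of_mem _ hσ₀T, ?_⟩, ?_⟩
      · intro k
        by_cases hk : k = j
        · subst hk; left; rw [Function.update_self]
        · rw [Function.update_of_ne hk]
          rcases hσ₀c k with h | h
          · exact Or.inl h
          · right; rwa [Function.update_of_ne hk] at h
      · rintro u ⟨huS', huc⟩
        obtain ⟨σ₁, hσ₁T, rfl⟩ := Finset.mem_image.mp huS'
        have he : σ₁ = σ₀ :=
          huniq σ₁ ⟨(Finset.mem_filter.mp hσ₁T).1, hcompat' σ₁ hσ₁T ε huc⟩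
        rw [he]
    have hsgn' : ∀ u ∈ S', ∀ k, u k = 1 ∨ u k = -1 ∨ u k = 0 := by
      intro u huS' k
      obtain ⟨σ, hσT, rfl⟩ := Finset.mem_image.mp huS'
      by_cases hk : k = j
      · subst hk; right; right; rw [Function.update_self]
      · rw [Function.update_of_ne hk]; exact hsgn σ (Finset.mem_filter.mp hσT).1 k
    have haux : ∀ σ₁ ∈ T, ∀ σ₂ ∈ T, (∀ k, k ≠ j → σ₁ k = σ₂ k) → σ₁ j = 0 → σ₂ j = 0 := by
      intro σ₁ h₁ σ₂ h₂ hk h0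
      by_contra hne0
      have h₂v : σ₂ j = -1 := (hTzero σ₂ h₂).resolve_left hne0
      have h₁S := (Finset.mem_filter.mp h₁).1
      have h₂S := (Finset.mem_filter.mp h₂).1
      set ε : ι → ℤ := fun k => if k = j then -1 else if σ₁ k = 0 then 1 else σ₁ k with hεd
      have hεpm : RPpm ε := by
        intro k
        by_cases hk' : k = j
        · right; simp [hεd, hk']
        · by_cases h0' : σ₁ k = 0
          · left; simp [hεd, hk', h0']
          · have : ε k = σ₁ k := by simp [hεd, hk', h0']
            rw [this]
            rcases hsgn σ₁ h₁S k with h | h | h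
            · exact Or.inl h
            · exact Or.inr h
            · exact absurd h h0'
      have hc₁ : RPCompat σ₁ ε := by
        intro k
        by_cases hk' : k = j
        · subst hk'; exact Or.inl h0
        · by_cases h0' : σ₁ k = 0
          · exact Or.inl h0'
          · right; simp [hεd, hk', h0']
      have hc₂ : RPCompat σ₂ ε := by
        intro k
        by_cases hk' : k = j
        · subst hk'; right; rw [h₂v]; simp [hεd]
        · rw [← hk k hk']
          exact hc₁ k
      obtain ⟨u, _, huq⟩ := hex ε hεpm
      have e1 := huq σ₁ ⟨h₁S, hc₁⟩
      have e2 := huq σ₂ ⟨h₂S, hc₂⟩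
      have : σ₂ j = σ₁ j := by rw [e1, e2]
      rw [h0] at this
      exact hne0 this
    have hinj : Set.InjOn (fun σ => Function.update σ j 0) (T : Set (ι → ℤ)) := by
      intro σ₁ h₁' σ₂ h₂' he
      have h₁ := Finset.mem_coe.mp h₁'
      have h₂ := Finset.mem_coe.mp h₂'
      have hks : ∀ k, k ≠ j → σ₁ k = σ₂ k := by
        intro k hk
        have := congrFun he k
        simpa [Function.update_of_ne hk] using this
      funext k
      by_cases hk : k = j
      · subst hk
        rcases hTzero σ₁ h₁ with h | h
        · rw [h, haux σ₁ h₁ σ₂ h₂ hks h]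
        · rcases hTzero σ₂ h₂ with h' | h'
          · exfalso
            have := haux σ₂ h₂ σ₁ h₁ (fun k hk => (hks k hk).symm) h'
            rw [h] at this
            norm_num at this
          · rw [h, h']
      · exact hks k hk
    have hcard' : S'.card = T.card := Finset.card_image_of_injOn hinj
    have hB' : (Finset.univ.filter fun k => ∃ u ∈ S', u k ≠ 0)
        = (Finset.univ.filter fun k => ∃ σ ∈ S, σ k ≠ 0).erase j := by
      ext k
      simp only [Finset.mem_erase, Finset.mem_filter, Finset.mem_univ, true_and]
      constructor
      · rintro ⟨u, huS', hu⟩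
        obtain ⟨σ, hσT, rfl⟩ := Finset.mem_image.mp huS'
        have hkj : k ≠ j := by
          rintro rfl
          exact hu (Function.update_self _ _ _)
        rw [Function.update_of_ne hkj] at hu
        exact ⟨hkj, σ, (Finset.mem_filter.mp hσT).1, hu⟩
      · rintro ⟨hkj, hkB⟩
        obtain ⟨σ, hσS, hσk, hσj⟩ := hpiv k hkB hkj
        refine ⟨Function.update σ j 0,
          Finset.mem_image_of_mem _ (Finset.mem_filter.mpr ⟨hσS, hσj⟩), ?_⟩
        rwa [Function.update_of_ne hkj]
    have hjmem : j ∈ (Finset.univ.filter fun k => ∃ σ ∈ S, σ k ≠ 0) :=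
      Finset.mem_filter.mpr ⟨Finset.mem_univ j, hjB⟩
    have hBpos : 1 ≤ (Finset.univ.filter fun k => ∃ σ ∈ S, σ k ≠ 0).card :=
      Finset.card_pos.mpr ⟨j, hjmem⟩
    have hBe : ((Finset.univ.filter fun k => ∃ σ ∈ S, σ k ≠ 0).erase j).card
        = (Finset.univ.filter fun k => ∃ σ ∈ S, σ k ≠ 0).card - 1 :=
      Finset.card_erase_of_mem hjmem
    have hih := ih S' hsgn' hex' (by rw [hB', hBe]; exact Nat.sub_le_iff_le_add.mpr hc)
    rw [hB', hBe, hcard'] at hih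
    have hplus : ∃ σ ∈ S, σ j = 1 := by
      obtain ⟨σ, hσS, hσj⟩ := hjB
      rcases hsgn σ hσS j with h | h | h
      · exact ⟨σ, hσS, h⟩
      · obtain ⟨σ', hσ', hv⟩ := RP.exists_neg hsgn hex hσS j hσj
        rw [h] at hv
        exact ⟨σ', hσ', by simpa using hv⟩
      · exact absurd h hσj
    have hone : 1 ≤ (S.filter (fun σ => σ j = 1)).card := by
      obtain ⟨σ, hσS, hσj⟩ := hplus
      exact Finset.card_pos.mpr ⟨σ, Finset.mem_filter.mpr ⟨hσS, hσj⟩⟩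
    have hsplit : (S.filter (fun σ => σ j = 1)).card + T.card = S.card := by
      rw [hT]
      exact Finset.card_filter_add_card_filter_not (s := S) (fun σ => σ j = 1)
    have hb : (Finset.univ.filter fun k => ∃ σ ∈ S, σ k ≠ 0).card ≤ T.card := by
      rwa [Nat.sub_add_cancel hBpos] at hih
    calc (Finset.univ.filter fun k => ∃ σ ∈ S, σ k ≠ 0).card + 1
        ≤ T.card + (S.filter (fun σ => σ j = 1)).card := add_le_add hb hone
      _ = S.card := by rw [add_comm]; exact hsplit

lemma RP.comb (S : Finset (ι → ℤ))
    (hsgn : ∀ σ ∈ S, ∀ j, σ j = 1 ∨ σ j = -1 ∨ σ j = 0)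
    (hex : ∀ ε : ι → ℤ, RPpm ε → ∃! σ, σ ∈ S ∧ RPCompat σ ε) :
    (Finset.univ.filter fun j => ∃ σ ∈ S, σ j ≠ 0).card + 1 ≤ S.card :=
  RP.comb_aux _ S hsgn hex le_rfl

end Comb

lemma RP.Icc_inj {n : ℕ} {a b a' b' : Fin n → ℝ} (h : ∀ i, a i < b i)
    (h' : ∀ i, a' i < b' i) (e : Set.Icc a b = Set.Icc a' b') : a = a' ∧ b = b' := by
  have hab : a ≤ b := fun i => (h i).le
  have hab' : a' ≤ b' := fun i => (h' i).le
  have h1 : a ∈ Set.Icc a' b' := e ▸ Set.mem_Icc.mpr ⟨le_refl a, hab⟩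
  have h2 : a' ∈ Set.Icc a b := e.symm ▸ Set.mem_Icc.mpr ⟨le_refl a', hab'⟩
  have h3 : b ∈ Set.Icc a' b' := e ▸ Set.mem_Icc.mpr ⟨hab, le_refl b⟩
  have h4 : b' ∈ Set.Icc a b := e.symm ▸ Set.mem_Icc.mpr ⟨hab', le_refl b'⟩
  exact ⟨le_antisymm h2.1 h1.1, le_antisymm h3.2 h4.2⟩

/-- for any regulated partition `P` of `ℝⁿ` and any `x ∈ ℝⁿ`,
`ν_P(x) ≥ β_P(x) + 1`. -/
theorem stmt3 (n : ℕ) (P : Set (Set (Fin n → ℝ))) (hP : IsRegPartition P) (x : Fin n → ℝ) :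
    betaP P x + 1 ≤ nuP P x := by
  obtain ⟨⟨D, d, hd0, hsep, hrect⟩, hcov, hdisj⟩ := hP
  choose! A B hAB hIcc using hrect
  -- gap function
  have hgex : ∀ i : Fin n, ∃ t : ℝ, 0 < t ∧ t ≤ d / 2 ∧ ∀ r ∈ D, r ≠ x i → t ≤ |x i - r| := by
    intro i
    by_cases h : ∃ r, r ∈ D ∧ r ≠ x i ∧ |x i - r| < d / 2
    · obtain ⟨r₀, hr₀D, hr₀ne, hr₀lt⟩ := h
      refine ⟨|x i - r₀|, ?_, hr₀lt.le, ?_⟩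
      · rw [abs_pos, sub_ne_zero]
        exact fun hh => hr₀ne hh.symm
      · intro r hrD hrne
        rcases le_or_gt (d / 2) |x i - r| with hle | hlt
        · exact hr₀lt.le.trans hle
        · rcases eq_or_ne r r₀ with rfl | hne
          · exact le_refl _
          · exfalso
            have hgt := hsep r hrD r₀ hr₀D hne
            have htri : |r - r₀| ≤ |r - x i| + |x i - r₀| := abs_sub_le r (x i) r₀
            rw [abs_sub_comm r (x i)] at htri
            linarith
    · push_neg at h
      exact ⟨d / 2, by linarith, le_refl _, fun r hr hne => h r hr hne⟩
  choose g hg0 hgd2 hgmin using hgex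
  set y : (Fin n → ℤ) → (Fin n → ℝ) := fun ε i => x i + g i / 2 * (ε i : ℝ) with hy
  set sgn : Set (Fin n → ℝ) → (Fin n → ℤ) :=
    fun Q j => if x j = A Q j then 1 else if x j = B Q j then -1 else 0 with hsgn_def
  have hyval : ∀ (ε : Fin n → ℤ), RPpm ε → ∀ i,
      (ε i = 1 → y ε i = x i + g i / 2) ∧ (ε i = -1 → y ε i = x i - g i / 2) := by
    intro ε hε i
    constructor <;> intro h <;> simp [hy, h] <;> ring
  -- key1
  have key1 : ∀ ε, RPpm ε → ∀ Q ∈ P, y ε ∈ Q →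
      (x ∈ Q ∧ (∀ i, A Q i < y ε i ∧ y ε i < B Q i) ∧ RPCompat (sgn Q) ε) := by
    intro ε hε Q hQ hyQ
    have hQI := hIcc Q hQ
    rw [hQI, Set.mem_Icc] at hyQ
    obtain ⟨hya, hyb⟩ := hyQ
    have hyne : ∀ i, y ε i ≠ x i ∧ |x i - y ε i| = g i / 2 := by
      intro i
      rcases hε i with h | h
      · rw [(hyval ε hε i).1 h]
        constructor
        · intro hc; nlinarith [hg0 i]
        · rw [abs_sub_comm]
          rw [show x i + g i / 2 - x i = g i / 2 by ring]
          exact abs_of_pos (by linarith [hg0 i])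
      · rw [(hyval ε hε i).2 h]
        constructor
        · intro hc; nlinarith [hg0 i]
        · rw [show x i - (x i - g i / 2) = g i / 2 by ring]
          exact abs_of_pos (by linarith [hg0 i])
    have hstrict : ∀ i, A Q i < y ε i ∧ y ε i < B Q i := by
      intro i
      constructor
      · refine lt_of_le_of_ne (hya i) ?_
        intro he
        have hne : A Q i ≠ x i := by rw [he]; exact (hyne i).1
        have := hgmin i (A Q i) (hAB Q hQ i).1 hne
        rw [he, (hyne i).2] at this
        linarith [hg0 i]
      · refine lt_of_le_of_ne (hyb i) ?_
        intro he
        have hne : B Q i ≠ x i := by rw [← he]; exact (hyne i).1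
        have := hgmin i (B Q i) (hAB Q hQ i).2.1 hne
        rw [← he, (hyne i).2] at this
        linarith [hg0 i]
    have hxQ : ∀ i, A Q i ≤ x i ∧ x i ≤ B Q i := by
      intro i
      rcases hε i with h1 | h1
      · have h3 : y ε i = x i + g i / 2 := (hyval ε hε i).1 h1
        constructor
        · by_contra hc
          push_neg at hc
          have hne : A Q i ≠ x i := ne_of_gt hc
          have hmin := hgmin i (A Q i) (hAB Q hQ i).1 hne
          rw [abs_of_neg (by linarith)] at hmin
          have h2 : A Q i ≤ y ε i := (hstrict i).1.le
          rw [h3] at h2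
          linarith [hg0 i]
        · have := (hstrict i).2
          rw [h3] at this
          linarith [hg0 i]
      · have h3 : y ε i = x i - g i / 2 := (hyval ε hε i).2 h1
        constructor
        · have := (hstrict i).1
          rw [h3] at this
          linarith [hg0 i]
        · by_contra hc
          push_neg at hc
          have hne : B Q i ≠ x i := ne_of_lt hc
          have hmin := hgmin i (B Q i) (hAB Q hQ i).2.1 hne
          rw [abs_of_pos (by linarith)] at hmin
          have h2 : y ε i ≤ B Q i := (hstrict i).2.le
          rw [h3] at h2
          linarith [hg0 i]
    have hcomp : RPCompat (sgn Q) ε := by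
      intro i
      by_cases h1 : x i = A Q i
      · right
        have hs1 : sgn Q i = 1 := by simp [hsgn_def, h1]
        rw [hs1]
        rcases hε i with h | h
        · exact h.symm
        · exfalso
          have h3 : y ε i = x i - g i / 2 := (hyval ε hε i).2 h
          have := (hstrict i).1
          rw [h3, ← h1] at this
          linarith [hg0 i]
      · by_cases h2 : x i = B Q i
        · right
          have hs1 : sgn Q i = -1 := by
            simp [hsgn_def, h1, h2, (hAB Q hQ i).2.2.ne']
          rw [hs1]
          rcases hε i with h | h
          · exfalso
            have h3 : y ε i = x i + g i / 2 := (hyval ε hε i).1 h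
            have := (hstrict i).2
            rw [h3, ← h2] at this
            linarith [hg0 i]
          · exact h.symm
        · left; simp [hsgn_def, h1, h2]
    refine ⟨?_, hstrict, hcomp⟩
    rw [hQI, Set.mem_Icc]
    exact ⟨fun i => (hxQ i).1, fun i => (hxQ i).2⟩
  -- key2
  have key2 : ∀ ε, RPpm ε → ∀ Q ∈ P, x ∈ Q → RPCompat (sgn Q) ε → y ε ∈ Q := by
    intro ε hε Q hQ hxQ hc
    have hQI := hIcc Q hQ
    rw [hQI, Set.mem_Icc] at hxQ ⊢
    obtain ⟨hxa, hxb⟩ := hxQ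
    have hab : ∀ i, A Q i ∈ D ∧ B Q i ∈ D ∧ A Q i < B Q i := hAB Q hQ
    have hmain : ∀ i, A Q i ≤ y ε i ∧ y ε i ≤ B Q i := by
      intro i
      have ha := hxa i
      have hb := hxb i
      have hgap : d < B Q i - A Q i := by
        have := hsep (A Q i) (hab i).1 (B Q i) (hab i).2.1 (ne_of_lt (hab i).2.2)
        rw [abs_of_neg (by linarith [(hab i).2.2])] at this
        linarith
      have hgd : g i / 2 < d := by linarith [hgd2 i, hg0 i, hd0]
      by_cases h1 : x i = A Q i
      · have hs1 : sgn Q i = 1 := by simp [hsgn_def, h1]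
        have hεi : ε i = 1 := by
          rcases hc i with h | h
          · rw [hs1] at h; norm_num at h
          · rw [hs1] at h; exact h.symm
        have h3 : y ε i = x i + g i / 2 := (hyval ε hε i).1 hεi
        rw [h3, h1]
        constructor
        · linarith [hg0 i]
        · linarith
      · by_cases h2 : x i = B Q i
        · have hs1 : sgn Q i = -1 := by
            simp [hsgn_def, h1, h2, (hab i).2.2.ne']
          have hεi : ε i = -1 := by
            rcases hc i with h | h
            · rw [hs1] at h; norm_num at h
            · rw [hs1] at h; exact h.symm
          have h3 : y ε i = x i - g i / 2 := (hyval ε hε i).2 hεi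
          rw [h3, h2]
          constructor
          · linarith
          · linarith [hg0 i]
        · have hal : A Q i < x i := lt_of_le_of_ne ha (fun h => h1 h.symm)
          have hbl : x i < B Q i := lt_of_le_of_ne hb h2
          have hga : g i ≤ x i - A Q i := by
            have := hgmin i (A Q i) (hab i).1 (ne_of_lt hal)
            rwa [abs_of_pos (by linarith)] at this
          have hgb : g i ≤ B Q i - x i := by
            have h' := hgmin i (B Q i) (hab i).2.1 (ne_of_gt hbl)
            rw [abs_of_neg (by linarith)] at h'
            linarith
          rcases hε i with h | h
          · rw [(hyval ε hε i).1 h]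
            constructor <;> linarith [hg0 i]
          · rw [(hyval ε hε i).2 h]
            constructor <;> linarith [hg0 i]
    rw [Pi.le_def, Pi.le_def]
    exact ⟨fun i => (hmain i).1, fun i => (hmain i).2⟩
  -- interior
  have hint : ∀ Q ∈ P, ∀ z : Fin n → ℝ, (∀ i, A Q i < z i ∧ z i < B Q i) → z ∈ interior Q := by
    intro Q hQ z hz
    have hsub : Set.pi Set.univ (fun i => Set.Ioo (A Q i) (B Q i)) ⊆ interior Q := by
      apply interior_maximal
      · intro w hw
        rw [hIcc Q hQ, Set.mem_Icc]
        exact ⟨fun i => (hw i trivial).1.le, fun i => (hw i trivial).2.le⟩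
      · exact isOpen_set_pi Set.finite_univ (fun i _ => isOpen_Ioo)
    exact hsub (fun i _ => ⟨(hz i).1, (hz i).2⟩)
  -- exact cover property
  have hexQ : ∀ ε, RPpm ε → ∃! Q, (Q ∈ P ∧ x ∈ Q) ∧ RPCompat (sgn Q) ε := by
    intro ε hε
    obtain ⟨Q, hQ, hyQ⟩ := hcov (y ε)
    obtain ⟨hxQ, hintQ, hcomp⟩ := key1 ε hε Q hQ hyQ
    refine ⟨Q, ⟨⟨hQ, hxQ⟩, hcomp⟩, ?_⟩
    rintro Q' ⟨⟨hQ', hxQ'⟩, hcomp'⟩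
    by_contra hne
    have hyQ' : y ε ∈ Q' := key2 ε hε Q' hQ' hxQ' hcomp'
    obtain ⟨_, hintQ', _⟩ := key1 ε hε Q' hQ' hyQ'
    have h1 := hint Q hQ (y ε) hintQ
    have h2 := hint Q' hQ' (y ε) hintQ'
    have hdis := hdisj Q' hQ' Q hQ hne
    exact Set.eq_empty_iff_forall_notMem.mp hdis (y ε) ⟨h2, h1⟩
  have hpm_sgn : ∀ Q, ∀ j, sgn Q j = 1 ∨ sgn Q j = -1 ∨ sgn Q j = 0 := by
    intro Q j
    simp only [hsgn_def]
    split_ifs <;> simp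
  have hepsQ : ∀ Q : Set (Fin n → ℝ), RPpm (fun j => if sgn Q j = 0 then 1 else sgn Q j)
      ∧ RPCompat (sgn Q) (fun j => if sgn Q j = 0 then 1 else sgn Q j) := by
    intro Q
    constructor
    · intro j
      by_cases h : sgn Q j = 0
      · left; simp [h]
      · rcases hpm_sgn Q j with h' | h' | h'
        · left; simp [h, h']
        · right; simp [h, h']
        · exact absurd h' h
    · intro j
      by_cases h : sgn Q j = 0
      · exact Or.inl h
      · right; simp [h]
  have hsgninj : ∀ Q₁, (Q₁ ∈ P ∧ x ∈ Q₁) → ∀ Q₂, (Q₂ ∈ P ∧ x ∈ Q₂) →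
      sgn Q₁ = sgn Q₂ → Q₁ = Q₂ := by
    intro Q₁ h1 Q₂ h2 he
    have hε := (hepsQ Q₁).1
    have hc1 := (hepsQ Q₁).2
    have hc2 : RPCompat (sgn Q₂) (fun j => if sgn Q₁ j = 0 then 1 else sgn Q₁ j) := by
      rw [← he]; exact hc1
    obtain ⟨Q₀, _, huniq⟩ := hexQ _ hε
    exact (huniq Q₁ ⟨h1, hc1⟩).trans (huniq Q₂ ⟨h2, hc2⟩).symm
  -- finiteness
  have hfin : {Q | Q ∈ P ∧ x ∈ Q}.Finite := by
    have hTfin : {f : Fin n → ℤ | ∀ j, f j = 1 ∨ f j = -1 ∨ f j = 0}.Finite := by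
      have : {f : Fin n → ℤ | ∀ j, f j = 1 ∨ f j = -1 ∨ f j = 0}
          ⊆ Set.pi Set.univ (fun _ : Fin n => ({1, -1, 0} : Set ℤ)) := by
        intro f hf j _
        rcases hf j with h | h | h <;> simp [h]
      exact (Set.Finite.pi (fun i => Set.toFinite ({1, -1, 0} : Set ℤ))).subset this
    apply Set.Finite.of_finite_image (f := sgn)
    · apply hTfin.subset
      rintro _ ⟨Q, _, rfl⟩
      exact hpm_sgn Q
    · intro Q₁ h1 Q₂ h2 he
      exact hsgninj Q₁ h1 Q₂ h2 he
  set S : Finset (Fin n → ℤ) := hfin.toFinset.image sgn with hS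
  have hSmem : ∀ σ, σ ∈ S ↔ ∃ Q, (Q ∈ P ∧ x ∈ Q) ∧ sgn Q = σ := by
    intro σ
    simp only [hS, Finset.mem_image, Set.Finite.mem_toFinset, Set.mem_setOf_eq]
  have hsgnS : ∀ σ ∈ S, ∀ j, σ j = 1 ∨ σ j = -1 ∨ σ j = 0 := by
    intro σ hσ j
    obtain ⟨Q, _, rfl⟩ := (hSmem σ).mp hσ
    exact hpm_sgn Q j
  have hexS : ∀ ε : Fin n → ℤ, RPpm ε → ∃! σ, σ ∈ S ∧ RPCompat σ ε := by
    intro ε hε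
    obtain ⟨Q, ⟨hQ, hcQ⟩, huniq⟩ := hexQ ε hε
    refine ⟨sgn Q, ⟨(hSmem _).mpr ⟨Q, hQ, rfl⟩, hcQ⟩, ?_⟩
    rintro σ ⟨hσS, hσc⟩
    obtain ⟨Q', hQ', rfl⟩ := (hSmem _).mp hσS
    rw [huniq Q' ⟨hQ', hσc⟩]
  have hcardS : S.card = hfin.toFinset.card := by
    apply Finset.card_image_of_injOn
    intro Q₁ h1 Q₂ h2 he
    exact hsgninj Q₁ (hfin.mem_toFinset.mp h1) Q₂ (hfin.mem_toFinset.mp h2) he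
  have hnu : nuP P x = S.card := by
    rw [nuP, hcardS, Set.ncard_eq_toFinset_card _ hfin]
  have hbeta : betaP P x = (Finset.univ.filter fun j => ∃ σ ∈ S, σ j ≠ 0).card := by
    rw [betaP]
    have hset : {j | IsBoundaryVector P x j}
        = ↑(Finset.univ.filter fun j => ∃ σ ∈ S, σ j ≠ 0) := by
      ext j
      simp only [Set.mem_setOf_eq, Finset.coe_filter, Finset.mem_univ, true_and,
        Set.mem_setOf_eq]
      constructor
      · rintro ⟨Q, hQ, F, ⟨a, b, habl, hQI, hF⟩, hxF⟩
        have hxQ : x ∈ Q := by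
          rcases hF with rfl | rfl
          · exact hxF.1
          · exact hxF.1
        obtain ⟨hA, hB⟩ := RP.Icc_inj habl (fun i => (hAB Q hQ i).2.2)
          (hQI.symm.trans (hIcc Q hQ))
        refine ⟨sgn Q, (hSmem _).mpr ⟨Q, ⟨hQ, hxQ⟩, rfl⟩, ?_⟩
        rcases hF with rfl | rfl
        · have hxa : x j = A Q j := by rw [← hA]; exact hxF.2
          simp [hsgn_def, hxa]
        · have hxb : x j = B Q j := by rw [← hB]; exact hxF.2
          have hxa : x j ≠ A Q j := by
            rw [hxb]
            exact (hAB Q hQ j).2.2.ne'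
          simp [hsgn_def, hxa, hxb, (hAB Q hQ j).2.2.ne']
      · rintro ⟨σ, hσS, hσj⟩
        obtain ⟨Q, ⟨hQ, hxQ⟩, rfl⟩ := (hSmem _).mp hσS
        refine ⟨Q, hQ, ?_⟩
        by_cases h1 : x j = A Q j
        · exact ⟨{z ∈ Q | z j = A Q j},
            ⟨A Q, B Q, fun i => (hAB Q hQ i).2.2, hIcc Q hQ, Or.inl rfl⟩, ⟨hxQ, h1⟩⟩
        · by_cases h2 : x j = B Q j
          · exact ⟨{z ∈ Q | z j = B Q j},
              ⟨A Q, B Q, fun i => (hAB Q hQ i).2.2, hIcc Q hQ, Or.inr rfl⟩, ⟨hxQ, h2⟩⟩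
          · exfalso
            apply hσj
            simp [hsgn_def, h1, h2]
    rw [hset, Set.ncard_coe_finset]
  rw [hbeta, hnu]
  exact RP.comb S hsgnS hexS
end

section
/- Let R be an n-dimensional rectangle in ℝⁿ, let x ∈ Int(R), and let 𝒫 be a locally regulated partition of R about x. For any nonempty set V of boundary vectors of x with respect to 𝒫, let 𝒫_V be the set of all P ∈ 𝒫 such that some v ∈ V is a boundary vector of x with respect to P (i.e., x lies on a face of P with normal vector v). Then |𝒫_V| ≥ |V| + 1. -/
private lemma pi_interior_Icc {n : ℕ} (a b : Fin n → ℝ) :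
    interior (Set.Icc a b) = {y : Fin n → ℝ | ∀ i, a i < y i ∧ y i < b i} := by
  rw [← Set.pi_univ_Icc, interior_pi_set Set.finite_univ]
  ext y
  simp [Set.mem_pi, interior_Icc, Set.mem_Ioo]

private lemma icc_ends {n : ℕ} {c d e f : Fin n → ℝ} (hcd : c ≤ d) (hef : e ≤ f)
    (h : Set.Icc c d = Set.Icc e f) : c = e ∧ d = f := by
  have h1 : c ∈ Set.Icc e f := h ▸ Set.mem_Icc.2 ⟨le_refl c, hcd⟩
  have h2 : e ∈ Set.Icc c d := h.symm ▸ Set.mem_Icc.2 ⟨le_refl e, hef⟩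
  have h3 : d ∈ Set.Icc e f := h ▸ Set.mem_Icc.2 ⟨hcd, le_refl d⟩
  have h4 : f ∈ Set.Icc c d := h.symm ▸ Set.mem_Icc.2 ⟨hef, le_refl f⟩
  exact ⟨le_antisymm h2.1 h1.1, le_antisymm h3.2 h4.2⟩

private lemma flip_sum_zero {n : ℕ} (j : Fin n) (S : Finset (Fin n → Bool))
    (hS : ∀ s ∈ S, Function.update s j (!s j) ∈ S) (h : (Fin n → Bool) → ℝ)
    (hh : ∀ s, h (Function.update s j (!s j)) = h s) :
    ∑ s ∈ S, (if s j then (1:ℝ) else -1) * h s = 0 := by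
  apply Finset.sum_involution (fun s _ => Function.update s j (!s j))
  · intro s hs
    rw [hh]
    rw [Function.update_self]
    cases hsj : s j <;> simp <;> ring
  · intro s hs hne heq
    have := congrFun heq j
    rw [Function.update_self] at this
    cases hsj : s j <;> rw [hsj] at this <;> simp at this
  · intro s hs
    funext i
    by_cases hi : i = j
    · subst hi; simp
    · simp [Function.update_of_ne hi]
  · exact hS

private lemma face_sub_face {n : ℕ} {a b c d : Fin n → ℝ} (hab : ∀ i, a i < b i)
    (hcd : ∀ i, c i < d i) (hac : a ≤ c) (hdb : d ≤ b) (j : Fin n) (v : ℝ)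
    (hv : v = c j ∨ v = d j)
    {G : Set (Fin n → ℝ)} (hG : IsFaceOf G (Set.Icc a b))
    (hFG : {y ∈ Set.Icc c d | y j = v} ⊆ G) : v = a j ∨ v = b j := by
  obtain ⟨k, a', b', ha'b', hR', hGdef⟩ := hG
  obtain ⟨hae, hbe⟩ := icc_ends (fun i => (hab i).le) (fun i => (ha'b' i).le) hR'
  subst hae; subst hbe
  have hcled : c ≤ d := fun i => (hcd i).le
  -- the point p : c updated at j to v
  set p : Fin n → ℝ := Function.update c j v with hp
  have hpIcc : p ∈ Set.Icc c d := by
    rw [Set.mem_Icc]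
    constructor <;> intro i <;> by_cases hi : i = j
    · subst hi; rw [hp, Function.update_self]
      rcases hv with hv | hv
      · exact le_of_eq hv.symm
      · rw [hv]; exact hcled i
    · rw [hp, Function.update_of_ne hi]
    · subst hi; rw [hp, Function.update_self]
      rcases hv with hv | hv
      · rw [hv]; exact hcled i
      · exact le_of_eq hv
    · rw [hp, Function.update_of_ne hi]; exact hcled i
  have hpj : p j = v := Function.update_self _ _ _
  have hpG : p ∈ G := hFG ⟨hpIcc, hpj⟩
  rcases eq_or_ne k j with rfl | hkj
  · rcases hGdef with rfl | rfl
    · exact Or.inl (hpj ▸ hpG.2.symm ▸ rfl)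
    · exact Or.inr (hpj ▸ hpG.2.symm ▸ rfl)
  · -- k ≠ j : contradiction
    exfalso
    set p2 : Fin n → ℝ := Function.update p k (d k) with hp2
    have hp2Icc : p2 ∈ Set.Icc c d := by
      rw [Set.mem_Icc]
      constructor <;> intro i <;> by_cases hi : i = k
      · subst hi; rw [hp2, Function.update_self]; exact hcled i
      · rw [hp2, Function.update_of_ne hi]; exact hpIcc.1 i
      · subst hi; rw [hp2, Function.update_self]
      · rw [hp2, Function.update_of_ne hi]; exact hpIcc.2 i
    have hp2j : p2 j = v := by
      rw [hp2, Function.update_of_ne (Ne.symm hkj)]; exact hpj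
    have hp2G : p2 ∈ G := hFG ⟨hp2Icc, hp2j⟩
    have hpk : p k = c k := by rw [hp, Function.update_of_ne hkj]
    have hp2k : p2 k = d k := Function.update_self _ _ _
    rcases hGdef with rfl | rfl
    · -- p k = a k and p2 k = a k  ⇒ c k = d k, contradiction
      have e1 : c k = a k := hpk ▸ hpG.2
      have e2 : d k = a k := hp2k ▸ hp2G.2
      exact absurd (e1.trans e2.symm) (ne_of_lt (hcd k))
    · have e1 : c k = b k := hpk ▸ hpG.2
      have e2 : d k = b k := hp2k ▸ hp2G.2
      exact absurd (e1.trans e2.symm) (ne_of_lt (hcd k))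

/-- if `P` is a locally regulated partition of `R` about `x` and `V` is a nonempty
set of boundary vectors of `x` with respect to `P`, then the set `P_V` of members of `P` having a
face through `x` with normal vector in `V` has at least `|V| + 1` elements. -/
theorem stmt4 (n : ℕ) (R : Set (Fin n → ℝ)) (x : Fin n → ℝ) (P : Set (Set (Fin n → ℝ)))
    (hR : IsRect R) (hx : x ∈ interior R)
    (hpart : IsLocRegPartition R P) (hab : IsAbout R P x)
    (V : Set (Fin n)) (hV : V.Nonempty) (hbd : ∀ j ∈ V, IsBoundaryVector P x j) :
    V.ncard + 1 ≤
      Set.ncard {Q | Q ∈ P ∧ ∃ j ∈ V, ∃ F, IsFaceWithNormal F Q j ∧ x ∈ F} := by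
  classical
  obtain ⟨⟨hPfin, hrect, hunion⟩, hdisj⟩ := hpart
  obtain ⟨a, b, habs, hR'⟩ := hR
  subst hR'
  have hx' : ∀ i, a i < x i ∧ x i < b i := by
    rw [pi_interior_Icc] at hx; exact hx
  have hQsub : ∀ Q ∈ P, Q ⊆ Set.Icc a b := fun Q hQ => hunion ▸ Set.subset_sUnion_of_mem hQ
  -- Structure of each box
  have hstruct : ∀ Q, Q ∈ P → ∃ c d : Fin n → ℝ, (∀ i, c i < d i) ∧ Q = Set.Icc c d ∧
      ∀ j, (c j = x j ∧ d j = b j) ∨ (c j = a j ∧ d j = x j) ∨ (c j = a j ∧ d j = b j) := by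
    intro Q hQ
    obtain ⟨c, d, hcd, hQIcc⟩ := hrect Q hQ
    refine ⟨c, d, hcd, hQIcc, ?_⟩
    have hcled : c ≤ d := fun i => (hcd i).le
    have hcQ : c ∈ Q := hQIcc ▸ Set.mem_Icc.2 ⟨le_refl c, hcled⟩
    have hdQ : d ∈ Q := hQIcc ▸ Set.mem_Icc.2 ⟨hcled, le_refl d⟩
    have hac : a ≤ c := (Set.mem_Icc.1 (hQsub Q hQ hcQ)).1
    have hdb : d ≤ b := (Set.mem_Icc.1 (hQsub Q hQ hdQ)).2
    intro j
    have hlow : c j = x j ∨ c j = a j := by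
      have hface : IsFaceOf ({y ∈ Q | y j = c j}) Q := ⟨j, c, d, hcd, hQIcc, Or.inl rfl⟩
      rcases hab Q hQ _ hface with hxF | ⟨G, hG, hFG⟩
      · exact Or.inl hxF.2.symm
      · right
        have := face_sub_face habs hcd hac hdb j (c j) (Or.inl rfl) hG (by rw [← hQIcc]; exact hFG)
        rcases this with h | h
        · exact h
        · exfalso
          have : c j < b j := lt_of_lt_of_le (hcd j) (hdb j)
          exact absurd h (ne_of_lt this)
    have hhigh : d j = x j ∨ d j = b j := by
      have hface : IsFaceOf ({y ∈ Q | y j = d j}) Q := ⟨j, c, d, hcd, hQIcc, Or.inr rfl⟩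
      rcases hab Q hQ _ hface with hxF | ⟨G, hG, hFG⟩
      · exact Or.inl hxF.2.symm
      · right
        have := face_sub_face habs hcd hac hdb j (d j) (Or.inr rfl) hG (by rw [← hQIcc]; exact hFG)
        rcases this with h | h
        · exfalso
          have : a j < d j := lt_of_le_of_lt (hac j) (hcd j)
          exact absurd h (ne_of_gt this)
        · exact h
    rcases hlow with hc | hc
    · rcases hhigh with hd | hd
      · exact absurd (hc.trans hd.symm) (ne_of_lt (hcd j))
      · exact Or.inl ⟨hc, hd⟩
    · rcases hhigh with hd | hd
      · exact Or.inr (Or.inl ⟨hc, hd⟩)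
      · exact Or.inr (Or.inr ⟨hc, hd⟩)
  choose! c d hcd hQIcc htri using hstruct
  -- the sign vector of each box
  set t : Set (Fin n → ℝ) → Fin n → ℝ :=
    fun Q j => if c Q j = x j then 1 else if d Q j = x j then -1 else 0 with ht
  have hcase : ∀ Q ∈ P, ∀ j,
      (t Q j = 1 ∧ c Q j = x j ∧ d Q j = b j) ∨
      (t Q j = -1 ∧ c Q j = a j ∧ d Q j = x j) ∨
      (t Q j = 0 ∧ c Q j = a j ∧ d Q j = b j) := by
    intro Q hQ j
    rcases htri Q hQ j with ⟨h1, h2⟩ | ⟨h1, h2⟩ | ⟨h1, h2⟩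
    · exact Or.inl ⟨by simp only [ht]; rw [if_pos h1], h1, h2⟩
    · refine Or.inr (Or.inl ⟨?_, h1, h2⟩)
      simp only [ht]
      rw [if_neg (by rw [h1]; exact ne_of_lt (hx' j).1), if_pos h2]
    · refine Or.inr (Or.inr ⟨?_, h1, h2⟩)
      simp only [ht]
      rw [if_neg (by rw [h1]; exact ne_of_lt (hx' j).1),
        if_neg (by rw [h2]; exact ne_of_gt (hx' j).2)]
  -- epsilon
  obtain ⟨j₀, hj₀⟩ := hV
  haveI hne : Nonempty (Fin n) := ⟨j₀⟩
  set ε : ℝ := (Finset.univ.inf' Finset.univ_nonempty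
      (fun j : Fin n => min (x j - a j) (b j - x j))) / 2 with hε
  have hεa : ∀ j, 2 * ε ≤ x j - a j := by
    intro j
    have h1 := Finset.inf'_le (b := j) (fun j : Fin n => min (x j - a j) (b j - x j))
      (Finset.mem_univ j)
    have h2 : min (x j - a j) (b j - x j) ≤ x j - a j := min_le_left _ _
    rw [hε]; linarith
  have hεb : ∀ j, 2 * ε ≤ b j - x j := by
    intro j
    have h1 := Finset.inf'_le (b := j) (fun j : Fin n => min (x j - a j) (b j - x j))
      (Finset.mem_univ j)
    have h2 : min (x j - a j) (b j - x j) ≤ b j - x j := min_le_right _ _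
    rw [hε]; linarith
  have hε0 : 0 < ε := by
    rw [hε]
    apply div_pos _ (by norm_num)
    rw [Finset.lt_inf'_iff]
    intro j _
    exact lt_min (by linarith [(hx' j).1]) (by linarith [(hx' j).2])
  -- perturbed points
  set sg : Bool → ℝ := fun v => if v then 1 else -1 with hsg
  set pt : (Fin n → Bool) → (Fin n → ℝ) := fun s j => x j + ε * sg (s j) with hpt
  have hsgval : ∀ v : Bool, sg v = 1 ∨ sg v = -1 := by
    intro v; cases v
    · exact Or.inr (by simp [hsg])
    · exact Or.inl (by simp [hsg])
  -- compatibility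
  have hcoordstrict : ∀ Q ∈ P, ∀ (s : Fin n → Bool) (i : Fin n),
      (t Q i = 0 ∨ t Q i = sg (s i)) → c Q i < pt s i ∧ pt s i < d Q i := by
    intro Q hQ s i hcompat
    rcases hcase Q hQ i with ⟨h1, h2, h3⟩ | ⟨h1, h2, h3⟩ | ⟨h1, h2, h3⟩
    · -- t = 1, so sg (s i) = 1, pt = x + ε
      have hs : sg (s i) = 1 := by
        rcases hcompat with h | h
        · rw [h1] at h; norm_num at h
        · rw [h1] at h; exact h.symm
      rw [hpt]; simp only [hs, h2, h3, mul_one]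
      constructor
      · linarith
      · linarith [hεb i]
    · have hs : sg (s i) = -1 := by
        rcases hcompat with h | h
        · rw [h1] at h; norm_num at h
        · rw [h1] at h; exact h.symm
      rw [hpt]; simp only [hs, h2, h3]
      constructor
      · linarith [hεa i]
      · linarith
    · rw [hpt]; simp only [h2, h3]
      rcases hsgval (s i) with hs | hs <;> rw [hs]
      · constructor
        · linarith [hεa i]
        · linarith [hεb i]
      · constructor
        · linarith [hεa i]
        · linarith [hεb i]
  have hcoordrev : ∀ Q ∈ P, ∀ (s : Fin n → Bool) (i : Fin n),
      c Q i ≤ pt s i → pt s i ≤ d Q i → (t Q i = 0 ∨ t Q i = sg (s i)) := by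
    intro Q hQ s i hle1 hle2
    rcases hcase Q hQ i with ⟨h1, h2, h3⟩ | ⟨h1, h2, h3⟩ | ⟨h1, h2, h3⟩
    · right; rw [h1]
      rcases hsgval (s i) with hs | hs
      · exact hs.symm
      · exfalso
        rw [hpt] at hle1; simp only [hs, h2] at hle1
        linarith
    · right; rw [h1]
      rcases hsgval (s i) with hs | hs
      · exfalso
        rw [hpt] at hle2; simp only [hs, h3, mul_one] at hle2
        linarith
      · exact hs.symm
    · exact Or.inl h1
  have hmem : ∀ Q ∈ P, ∀ s : Fin n → Bool,
      (pt s ∈ Q ↔ ∀ i, t Q i = 0 ∨ t Q i = sg (s i)) := by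
    intro Q hQ s
    have hQI := hQIcc Q hQ
    constructor
    · intro hmemQ i
      rw [hQI, Set.mem_Icc] at hmemQ
      exact hcoordrev Q hQ s i (hmemQ.1 i) (hmemQ.2 i)
    · intro hcompat
      rw [hQI, Set.mem_Icc]
      exact ⟨fun i => (hcoordstrict Q hQ s i (hcompat i)).1.le,
             fun i => (hcoordstrict Q hQ s i (hcompat i)).2.le⟩
  have hint : ∀ Q ∈ P, ∀ s : Fin n → Bool,
      (∀ i, t Q i = 0 ∨ t Q i = sg (s i)) → pt s ∈ interior Q := by
    intro Q hQ s hcompat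
    rw [hQIcc Q hQ, pi_interior_Icc]
    exact fun i => hcoordstrict Q hQ s i (hcompat i)
  -- choose the box containing each perturbed point
  have hq0 : ∀ s : Fin n → Bool, ∃ Q, Q ∈ P ∧ pt s ∈ Q := by
    intro s
    have hmemR : pt s ∈ Set.Icc a b := by
      rw [Set.mem_Icc]
      constructor <;> intro i <;> rw [hpt] <;> rcases hsgval (s i) with hs | hs <;>
        simp only [hs, mul_one] <;> [skip; skip; skip; skip] <;>
        first
          | linarith [hεa i, hεb i, hε0, (hx' i).1, (hx' i).2]
    have : pt s ∈ ⋃₀ P := hunion.symm ▸ hmemR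
    obtain ⟨Q, hQ, hmemQ⟩ := this
    exact ⟨Q, hQ, hmemQ⟩
  choose q hqP hqmem using hq0
  have huniq : ∀ (s : Fin n → Bool), ∀ Q ∈ P, pt s ∈ Q → Q = q s := by
    intro s Q hQ hmemQ
    by_contra hne
    have h1 : pt s ∈ interior Q := hint Q hQ s ((hmem Q hQ s).1 hmemQ)
    have h2 : pt s ∈ interior (q s) := hint _ (hqP s) s ((hmem _ (hqP s) s).1 (hqmem s))
    have hd := hdisj Q hQ (q s) (hqP s) hne
    exact Set.eq_empty_iff_forall_notMem.1 hd (pt s) ⟨h1, h2⟩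
  have hfiber : ∀ (s : Fin n → Bool), ∀ Q ∈ P,
      (q s = Q ↔ ∀ i, t Q i = 0 ∨ t Q i = sg (s i)) := by
    intro s Q hQ
    constructor
    · rintro rfl
      exact (hmem _ hQ s).1 (hqmem s)
    · intro hc
      exact (huniq s Q hQ ((hmem Q hQ s).2 hc)).symm
  -- x belongs to every box
  have hxQ : ∀ Q ∈ P, x ∈ Q := by
    intro Q hQ
    rw [hQIcc Q hQ, Set.mem_Icc]
    constructor <;> intro i <;>
      rcases hcase Q hQ i with ⟨_, h2, h3⟩ | ⟨_, h2, h3⟩ | ⟨_, h2, h3⟩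
    · exact le_of_eq h2
    · rw [h2]; exact (hx' i).1.le
    · rw [h2]; exact (hx' i).1.le
    · rw [h3]; exact (hx' i).2.le
    · exact le_of_eq h3.symm
    · rw [h3]; exact (hx' i).2.le
  -- boundary-vector characterisation
  have hbdchar : ∀ Q ∈ P, ∀ j, (∃ F, IsFaceWithNormal F Q j ∧ x ∈ F) ↔ t Q j ≠ 0 := by
    intro Q hQ j
    constructor
    · rintro ⟨F, ⟨a', b', ha'b', hQ', hF⟩, hxF⟩
      have hends := icc_ends (fun i => (hcd Q hQ i).le) (fun i => (ha'b' i).le)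
        ((hQIcc Q hQ).symm.trans hQ')
      rcases hcase Q hQ j with ⟨h1, h2, h3⟩ | ⟨h1, h2, h3⟩ | ⟨h1, h2, h3⟩
      · rw [h1]; norm_num
      · rw [h1]; norm_num
      · exfalso
        rcases hF with rfl | rfl
        · have hxa : x j = a' j := hxF.2
          rw [← hends.1, h2] at hxa
          exact absurd hxa (ne_of_gt (hx' j).1)
        · have hxb : x j = b' j := hxF.2
          rw [← hends.2, h3] at hxb
          exact absurd hxb (ne_of_lt (hx' j).2)
    · intro ht0
      rcases hcase Q hQ j with ⟨h1, h2, h3⟩ | ⟨h1, h2, h3⟩ | ⟨h1, h2, h3⟩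
      · exact ⟨{y ∈ Q | y j = c Q j}, ⟨c Q, d Q, hcd Q hQ, hQIcc Q hQ, Or.inl rfl⟩,
          hxQ Q hQ, h2.symm⟩
      · exact ⟨{y ∈ Q | y j = d Q j}, ⟨c Q, d Q, hcd Q hQ, hQIcc Q hQ, Or.inr rfl⟩,
          hxQ Q hQ, h3.symm⟩
      · exact absurd h1 ht0
  -- the goal set
  set GS : Set (Set (Fin n → ℝ)) :=
    {Q | Q ∈ P ∧ ∃ j ∈ V, ∃ F, IsFaceWithNormal F Q j ∧ x ∈ F} with hGS
  have hGSfin : GS.Finite := hPfin.subset (fun Q hQ => hQ.1)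
  set TF : Finset (Set (Fin n → ℝ)) := hGSfin.toFinset with hTFdef
  have hTFmem : ∀ Q, Q ∈ TF ↔ (Q ∈ P ∧ ∃ j ∈ V, t Q j ≠ 0) := by
    intro Q
    rw [hTFdef, Set.Finite.mem_toFinset]
    constructor
    · rintro ⟨hQ, j, hjV, hF⟩
      exact ⟨hQ, j, hjV, (hbdchar Q hQ j).1 hF⟩
    · rintro ⟨hQ, j, hjV, htj⟩
      exact ⟨hQ, j, hjV, (hbdchar Q hQ j).2 htj⟩
  set PF : Finset (Set (Fin n → ℝ)) := hPfin.toFinset with hPFdef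
  have hPFmem : ∀ Q, Q ∈ PF ↔ Q ∈ P := fun Q => Set.Finite.mem_toFinset _
  have hsubTP : TF ⊆ PF := by
    intro Q hQ
    exact (hPFmem Q).2 ((hTFmem Q).1 hQ).1
  -- fiber cardinalities
  set w : Set (Fin n → ℝ) → ℕ :=
    fun Q => (Finset.univ.filter (fun s : Fin n → Bool => q s = Q)).card with hw
  have hconst : ∀ Q ∈ P, ∀ j, t Q j ≠ 0 →
      ∀ s ∈ Finset.univ.filter (fun s : Fin n → Bool => q s = Q), sg (s j) = t Q j := by
    intro Q hQ j ht0 s hs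
    rw [Finset.mem_filter] at hs
    rcases (hfiber s Q hQ).1 hs.2 j with h | h
    · exact absurd h ht0
    · exact h.symm
  have hflipmem : ∀ Q ∈ P, ∀ j, t Q j = 0 →
      ∀ s ∈ Finset.univ.filter (fun s : Fin n → Bool => q s = Q),
        Function.update s j (!s j) ∈ Finset.univ.filter (fun s : Fin n → Bool => q s = Q) := by
    intro Q hQ j ht0 s hs
    rw [Finset.mem_filter] at hs ⊢
    refine ⟨Finset.mem_univ _, ?_⟩
    rw [hfiber _ Q hQ]
    intro i
    by_cases hi : i = j
    · subst hi; exact Or.inl ht0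
    · rw [Function.update_of_ne hi]
      exact (hfiber s Q hQ).1 hs.2 i
  -- per-fiber sums
  have hfib1 : ∀ Q ∈ P, ∀ j,
      ∑ s ∈ Finset.univ.filter (fun s : Fin n → Bool => q s = Q), sg (s j)
        = (w Q : ℝ) * t Q j := by
    intro Q hQ j
    by_cases ht0 : t Q j = 0
    · rw [ht0, mul_zero]
      have h0 := flip_sum_zero j _ (hflipmem Q hQ j ht0) (fun _ => 1) (fun s => rfl)
      simpa [hsg] using h0
    · rw [Finset.sum_congr rfl (hconst Q hQ j ht0), Finset.sum_const, nsmul_eq_mul]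
  have hfib2 : ∀ Q ∈ P, ∀ j k : Fin n, j ≠ k →
      ∑ s ∈ Finset.univ.filter (fun s : Fin n → Bool => q s = Q), sg (s j) * sg (s k)
        = (w Q : ℝ) * t Q j * t Q k := by
    intro Q hQ j k hjk
    by_cases htj : t Q j = 0
    · rw [htj, mul_zero, zero_mul]
      have h0 := flip_sum_zero j _ (hflipmem Q hQ j htj) (fun s => sg (s k))
        (fun s => by
          show sg (Function.update s j (!s j) k) = sg (s k)
          rw [Function.update_of_ne (Ne.symm hjk)])
      simpa [hsg] using h0
    · by_cases htk : t Q k = 0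
      · rw [htk, mul_zero]
        rw [Finset.sum_congr rfl (fun s _ => mul_comm (sg (s j)) (sg (s k)))]
        have h0 := flip_sum_zero k _ (hflipmem Q hQ k htk) (fun s => sg (s j))
          (fun s => by
            show sg (Function.update s k (!s k) j) = sg (s j)
            rw [Function.update_of_ne hjk])
        simpa [hsg] using h0
      · rw [Finset.sum_congr rfl
          (fun s hs => by rw [hconst Q hQ j htj s hs, hconst Q hQ k htk s hs]),
          Finset.sum_const, nsmul_eq_mul, mul_assoc]
  -- global sums
  have hglob1 : ∀ j : Fin n, ∑ s : Fin n → Bool, sg (s j) = 0 := by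
    intro j
    have h0 := flip_sum_zero j Finset.univ (fun s _ => Finset.mem_univ _)
      (fun _ => 1) (fun s => rfl)
    simpa [hsg] using h0
  have hglob2 : ∀ j k : Fin n, j ≠ k →
      ∑ s : Fin n → Bool, sg (s j) * sg (s k) = 0 := by
    intro j k hjk
    have h0 := flip_sum_zero j Finset.univ (fun s _ => Finset.mem_univ _)
      (fun s => sg (s k)) (fun s => by
        show sg (Function.update s j (!s j) k) = sg (s k)
        rw [Function.update_of_ne (Ne.symm hjk)])
    simpa [hsg] using h0
  -- box sums
  have hmapsto : ∀ s : Fin n → Bool, s ∈ Finset.univ → q s ∈ PF :=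
    fun s _ => (hPFmem (q s)).2 (hqP s)
  have hbox1 : ∀ j : Fin n, ∑ Q ∈ PF, (w Q : ℝ) * t Q j = 0 := by
    intro j
    calc ∑ Q ∈ PF, (w Q : ℝ) * t Q j
        = ∑ Q ∈ PF, ∑ s ∈ Finset.univ.filter (fun s : Fin n → Bool => q s = Q), sg (s j) :=
          Finset.sum_congr rfl (fun Q hQ => (hfib1 Q ((hPFmem Q).1 hQ) j).symm)
      _ = ∑ s : Fin n → Bool, sg (s j) := Finset.sum_fiberwise_of_maps_to hmapsto _
      _ = 0 := hglob1 j
  have hbox2 : ∀ j k : Fin n, j ≠ k → ∑ Q ∈ PF, (w Q : ℝ) * t Q j * t Q k = 0 := by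
    intro j k hjk
    calc ∑ Q ∈ PF, (w Q : ℝ) * t Q j * t Q k
        = ∑ Q ∈ PF, ∑ s ∈ Finset.univ.filter (fun s : Fin n → Bool => q s = Q),
            sg (s j) * sg (s k) :=
          Finset.sum_congr rfl (fun Q hQ => (hfib2 Q ((hPFmem Q).1 hQ) j k hjk).symm)
      _ = ∑ s : Fin n → Bool, sg (s j) * sg (s k) := Finset.sum_fiberwise_of_maps_to hmapsto _
      _ = 0 := hglob2 j k hjk
  -- restricted sums
  have htf1 : ∀ j ∈ V, ∑ Q ∈ TF, (w Q : ℝ) * t Q j = 0 := by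
    intro j hjV
    have hvan : ∀ Q ∈ PF, Q ∉ TF → (w Q : ℝ) * t Q j = 0 := by
      intro Q hQPF hQTF
      have hQP : Q ∈ P := (hPFmem Q).1 hQPF
      have ht0 : t Q j = 0 := by
        by_contra h
        exact hQTF ((hTFmem Q).2 ⟨hQP, j, hjV, h⟩)
      rw [ht0, mul_zero]
    rw [Finset.sum_subset hsubTP hvan]
    exact hbox1 j
  have htf2 : ∀ j ∈ V, ∀ k : Fin n, j ≠ k →
      ∑ Q ∈ TF, (w Q : ℝ) * t Q j * t Q k = 0 := by
    intro j hjV k hjk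
    have hvan : ∀ Q ∈ PF, Q ∉ TF → (w Q : ℝ) * t Q j * t Q k = 0 := by
      intro Q hQPF hQTF
      have hQP : Q ∈ P := (hPFmem Q).1 hQPF
      have ht0 : t Q j = 0 := by
        by_contra h
        exact hQTF ((hTFmem Q).2 ⟨hQP, j, hjV, h⟩)
      rw [ht0, mul_zero, zero_mul]
    rw [Finset.sum_subset hsubTP hvan]
    exact hbox2 j k hjk
  -- every box is hit
  have hhit : ∀ Q ∈ P, ∃ s : Fin n → Bool, q s = Q := by
    intro Q hQ
    refine ⟨fun i => if t Q i = 1 then true else false, (hfiber _ Q hQ).2 ?_⟩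
    intro i
    rcases hcase Q hQ i with ⟨h1, _, _⟩ | ⟨h1, _, _⟩ | ⟨h1, _, _⟩
    · right; simp only [h1, hsg]; norm_num
    · right; simp only [h1, hsg]; norm_num
    · exact Or.inl h1
  have hwpos : ∀ Q ∈ P, 1 ≤ w Q := by
    intro Q hQ
    obtain ⟨s, hs⟩ := hhit Q hQ
    exact Finset.card_pos.2 ⟨s, Finset.mem_filter.2 ⟨Finset.mem_univ _, hs⟩⟩
  have hQstar : ∀ j ∈ V, ∃ Q, Q ∈ P ∧ t Q j ≠ 0 ∧ Q ∈ TF := by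
    intro j hjV
    obtain ⟨Q, hQ, F, hF, hxF⟩ := hbd j hjV
    have htj := (hbdchar Q hQ j).1 ⟨F, hF, hxF⟩
    exact ⟨Q, hQ, htj, (hTFmem Q).2 ⟨hQ, j, hjV, htj⟩⟩
  have htsq : ∀ Q ∈ P, ∀ j, t Q j ≠ 0 → t Q j * t Q j = 1 := by
    intro Q hQ j h
    rcases hcase Q hQ j with ⟨h1, _, _⟩ | ⟨h1, _, _⟩ | ⟨h1, _, _⟩
    · rw [h1]; norm_num
    · rw [h1]; norm_num
    · exact absurd h1 h
  have hdiagpos : ∀ j ∈ V, 0 < ∑ Q ∈ TF, (w Q : ℝ) * t Q j * t Q j := by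
    intro j hjV
    obtain ⟨Q', hQ'P, ht', hQ'TF⟩ := hQstar j hjV
    have hterm : (1 : ℝ) ≤ (w Q' : ℝ) * t Q' j * t Q' j := by
      rw [mul_assoc, htsq Q' hQ'P j ht', mul_one]
      exact_mod_cast hwpos Q' hQ'P
    have hnonneg : ∀ Q ∈ TF, 0 ≤ (w Q : ℝ) * t Q j * t Q j := fun Q _ => by
      rw [mul_assoc]
      exact mul_nonneg (Nat.cast_nonneg _) (mul_self_nonneg _)
    calc (0:ℝ) < 1 := one_pos
      _ ≤ (w Q' : ℝ) * t Q' j * t Q' j := hterm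
      _ ≤ ∑ Q ∈ TF, (w Q : ℝ) * t Q j * t Q j := Finset.single_le_sum hnonneg hQ'TF
  have honepos : 0 < ∑ Q ∈ TF, (w Q : ℝ) := by
    obtain ⟨Q', hQ'P, _, hQ'TF⟩ := hQstar j₀ hj₀
    have hterm : (1 : ℝ) ≤ (w Q' : ℝ) := by exact_mod_cast hwpos Q' hQ'P
    calc (0:ℝ) < 1 := one_pos
      _ ≤ (w Q' : ℝ) := hterm
      _ ≤ ∑ Q ∈ TF, (w Q : ℝ) :=
          Finset.single_le_sum (f := fun Q => (w Q : ℝ)) (fun Q _ => Nat.cast_nonneg _) hQ'TF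
  -- linear algebra finale
  haveI : Fintype ↥V := (Set.toFinite V).fintype
  set u : Option ↥V → (↥TF → ℝ) :=
    fun o Q => Option.elim o 1 (fun j => t Q.1 j.1) with hu
  set B : (↥TF → ℝ) → (↥TF → ℝ) → ℝ :=
    fun f g => ∑ Q ∈ TF.attach, (w Q.1 : ℝ) * f Q * g Q with hBdef
  have horth : ∀ o o' : Option ↥V, o ≠ o' → B (u o) (u o') = 0 := by
    intro o o' hne
    match o, o' with
    | none, none => exact absurd rfl hne
    | none, some j =>
      have he : B (u none) (u (some j)) = ∑ Q ∈ TF, (w Q : ℝ) * t Q j.1 := by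
        simp only [hBdef, hu, Option.elim]
        rw [← Finset.sum_attach TF (fun Q => (w Q : ℝ) * t Q j.1)]
        apply Finset.sum_congr rfl
        intro Q _
        ring
      rw [he]; exact htf1 j.1 j.2
    | some j, none =>
      have he : B (u (some j)) (u none) = ∑ Q ∈ TF, (w Q : ℝ) * t Q j.1 := by
        simp only [hBdef, hu, Option.elim]
        rw [← Finset.sum_attach TF (fun Q => (w Q : ℝ) * t Q j.1)]
        apply Finset.sum_congr rfl
        intro Q _
        ring
      rw [he]; exact htf1 j.1 j.2
    | some j, some k =>
      have hjk : j ≠ k := fun h => hne (by rw [h])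
      have hjk1 : (j : Fin n) ≠ (k : Fin n) := Subtype.coe_ne_coe.2 hjk
      have he : B (u (some j)) (u (some k))
          = ∑ Q ∈ TF, (w Q : ℝ) * t Q j.1 * t Q k.1 := by
        simp only [hBdef, hu, Option.elim]
        rw [← Finset.sum_attach TF (fun Q => (w Q : ℝ) * t Q j.1 * t Q k.1)]
      rw [he]; exact htf2 j.1 j.2 k.1 hjk1
  have hdiag : ∀ o : Option ↥V, 0 < B (u o) (u o) := by
    intro o
    match o with
    | none =>
      have he : B (u none) (u none) = ∑ Q ∈ TF, (w Q : ℝ) := by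
        simp only [hBdef, hu, Option.elim]
        rw [← Finset.sum_attach TF (fun Q => (w Q : ℝ))]
        apply Finset.sum_congr rfl
        intro Q _
        ring
      rw [he]; exact honepos
    | some j =>
      have he : B (u (some j)) (u (some j))
          = ∑ Q ∈ TF, (w Q : ℝ) * t Q j.1 * t Q j.1 := by
        simp only [hBdef, hu, Option.elim]
        rw [← Finset.sum_attach TF (fun Q => (w Q : ℝ) * t Q j.1 * t Q j.1)]
      rw [he]; exact hdiagpos j.1 j.2
  have hli : LinearIndependent ℝ u := by
    rw [Fintype.linearIndependent_iff]
    intro g hg o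
    have hexp : B (∑ i : Option ↥V, g i • u i) (u o)
        = ∑ i : Option ↥V, g i * B (u i) (u o) := by
      calc B (∑ i : Option ↥V, g i • u i) (u o)
          = ∑ Q ∈ TF.attach, ∑ i : Option ↥V,
              g i * ((w Q.1 : ℝ) * u i Q * u o Q) := by
            simp only [hBdef]
            apply Finset.sum_congr rfl
            intro Q _
            rw [Finset.sum_apply]
            simp only [Pi.smul_apply, smul_eq_mul, Finset.mul_sum, Finset.sum_mul]
            apply Finset.sum_congr rfl
            intro i _
            ring
        _ = ∑ i : Option ↥V, g i * B (u i) (u o) := by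
            rw [Finset.sum_comm]
            apply Finset.sum_congr rfl
            intro i _
            simp only [hBdef]
            rw [Finset.mul_sum]
    have h0 : B (∑ i : Option ↥V, g i • u i) (u o) = 0 := by
      rw [hg]
      simp [hBdef]
    rw [hexp, Fintype.sum_eq_single o (fun i hi => by rw [horth i o hi, mul_zero])] at h0
    rcases mul_eq_zero.1 h0 with h | h
    · exact h
    · exact absurd h (ne_of_gt (hdiag o))
  haveI : Module.Finite ℝ (↥TF → ℝ) := inferInstance
  have hcard := hli.fintype_card_le_finrank
  rw [Module.finrank_pi, Fintype.card_option, Fintype.card_coe] at hcard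
  have h1 : V.ncard = Fintype.card ↥V := by
    rw [Set.ncard_eq_toFinset_card', Set.toFinset_card]
  have h2 : GS.ncard = TF.card := Set.ncard_eq_toFinset_card GS hGSfin
  rw [h1]
  rw [show Set.ncard {Q | Q ∈ P ∧ ∃ j ∈ V, ∃ F, IsFaceWithNormal F Q j ∧ x ∈ F} = GS.ncard from rfl, h2]
  exact hcard
end
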